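/- arXiv:1910.14630 — 7 statements merged into one kernel-verified Lean document; each statement's English description precedes it below -/
import Mathlib

section
/- If the averaging inequality holds for exponents (p,q), i.e. ‖A_N f‖_{ℓ^q} ≤ C · N^{-d(1/p-1/q)} ‖f‖_{ℓ^p} for all N and all finitely supported f, then for every λ with 0 < 1-λ < min{1, d(1/p-1/q)}, the fractional integral inequality ‖I_λ f‖_{ℓ^q} ≤ C' ‖f‖_{ℓ^p} holds for all finitely supported f, where C' depends only on C, λ, d, p, q. -/
open Finset

/-- ℓ^p norm (finite real exponent) of a function on ℤ. -/
noncomputable def lpNorm (p : ℝ) (f : ℤ → ℂ) : ℝ :=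
  (∑' x : ℤ, ‖f x‖ ^ p) ^ (1 / p)

/-- Averaging operator along a polynomial `P`. -/
noncomputable def avg (P : Polynomial ℤ) (N : ℕ) (f : ℤ → ℂ) (x : ℤ) : ℂ :=
  (N : ℂ)⁻¹ * ∑ k ∈ Finset.Icc (1 : ℤ) (N : ℤ), f (x + P.eval k)

/-- Fractional integral operator along a polynomial `P`. -/
noncomputable def frac (P : Polynomial ℤ) (lam : ℝ) (f : ℤ → ℂ) (x : ℤ) : ℂ :=
  ∑' k : ℕ, ((((k : ℝ) + 1) ^ (-lam) : ℝ) : ℂ) * f (x + P.eval ((k : ℤ) + 1))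

open Filter

private lemma tele_hasSum {g : ℕ → ℝ} (hmono : ∀ n, g (n+1) ≤ g n)
    (h0 : Tendsto g atTop (nhds 0)) :
    HasSum (fun n => g n - g (n+1)) (g 0) := by
  rw [hasSum_iff_tendsto_nat_of_nonneg (fun n => sub_nonneg.2 (hmono n))]
  have h : ∀ n, ∑ i ∈ Finset.range n, (g i - g (i+1)) = g 0 - g n :=
    fun n => Finset.sum_range_sub' g n
  simp only [h]
  simpa using tendsto_const_nhds.sub h0

private lemma rpow_diff_le {lam : ℝ} (hlam : 0 ≤ lam) {a : ℝ} (ha : 1 ≤ a) :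
    a ^ (-lam) - (a+1) ^ (-lam) ≤ lam * a ^ (-lam - 1) := by
  have ha0 : (0:ℝ) < a := lt_of_lt_of_le one_pos ha
  have hcont : ContinuousOn (fun x : ℝ => x ^ (-lam)) (Set.Icc a (a+1)) := by
    intro x hx
    have hx0 : x ≠ 0 := by have := hx.1; intro h; rw [h] at this; linarith
    exact (Real.continuousAt_rpow_const x (-lam) (Or.inl hx0)).continuousWithinAt
  have hderiv : ∀ x ∈ Set.Ioo a (a+1),
      HasDerivAt (fun x : ℝ => x ^ (-lam)) ((-lam) * x ^ (-lam - 1)) x := by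
    intro x hx
    have hx0 : x ≠ 0 := by have := hx.1; intro h; rw [h] at this; linarith
    exact Real.hasDerivAt_rpow_const (Or.inl hx0)
  obtain ⟨c, hc, hEq⟩ := exists_hasDerivAt_eq_slope (fun x : ℝ => x ^ (-lam))
    (fun x => (-lam) * x ^ (-lam - 1)) (lt_add_one a) hcont hderiv
  have hc0 : 0 < c := lt_trans ha0 hc.1
  have h1 : (a+1) - a = (1:ℝ) := by ring
  rw [h1, div_one] at hEq
  have h2 : a ^ (-lam) - (a+1) ^ (-lam) = lam * c ^ (-lam - 1) := by
    nlinarith [hEq]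
  rw [h2]
  have h3 : c ^ (-lam - 1) ≤ a ^ (-lam - 1) :=
    Real.rpow_le_rpow_of_nonpos ha0 hc.1.le (by linarith)
  exact mul_le_mul_of_nonneg_left h3 hlam

set_option maxHeartbeats 1000000 in
theorem stmt_0 (d : ℕ) (hd : 1 ≤ d) (P : Polynomial ℤ) (hP : P.natDegree = d)
    (p q : ℝ) (hp : 1 ≤ p) (hpq : p ≤ q) (C : ℝ)
    (hA : ∀ N : ℕ, 1 ≤ N → ∀ f : ℤ → ℂ, (Function.support f).Finite →
      lpNorm q (avg P N f) ≤ C * (N : ℝ) ^ (-((d : ℝ) * (1 / p - 1 / q))) * lpNorm p f)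
    (lam : ℝ) (h1 : 0 < 1 - lam) (h2 : 1 - lam < min 1 ((d : ℝ) * (1 / p - 1 / q))) :
    ∃ C' : ℝ, ∀ f : ℤ → ℂ, (Function.support f).Finite →
      lpNorm q (frac P lam f) ≤ C' * lpNorm p f := by
  classical
  set δ : ℝ := (d : ℝ) * (1 / p - 1 / q) with hδdef
  have hδ : 1 - lam < δ := lt_of_lt_of_le h2 (min_le_right _ _)
  have hlam0 : 0 < lam := by
    have := lt_of_lt_of_le h2 (min_le_left _ _); linarith
  have hq1 : 1 ≤ q := le_trans hp hpq
  have hq0 : 0 < q := lt_of_lt_of_le one_pos hq1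
  set Q : ENNReal := ENNReal.ofReal q with hQdef
  haveI : Fact (1 ≤ Q) := ⟨by rw [hQdef]; exact ENNReal.one_le_ofReal.mpr hq1⟩
  have hQt : Q.toReal = q := ENNReal.toReal_ofReal hq0.le
  have hQpos : 0 < Q.toReal := by rw [hQt]; exact hq0
  have hQ0 : Q ≠ 0 := by
    rw [hQdef]
    simp only [ne_eq, ENNReal.ofReal_eq_zero, not_le]
    exact hq0
  -- the telescoping weights
  set G : ℕ → ℝ := fun k => ((k:ℝ)+1) ^ (-lam) with hGdef
  set b : ℕ → ℝ := fun N => G N - G (N+1) with hbdef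
  have hGmono : ∀ n : ℕ, G (n+1) ≤ G n := by
    intro n
    apply Real.rpow_le_rpow_of_nonpos (by positivity) (by push_cast; linarith) (by linarith)
  have hbnonneg : ∀ N, 0 ≤ b N := fun N => sub_nonneg.2 (hGmono N)
  have hGlim : Tendsto G atTop (nhds 0) := by
    have := (tendsto_rpow_neg_atTop hlam0).comp
      (tendsto_atTop_add_const_right atTop (1:ℝ) tendsto_natCast_atTop_atTop)
    exact this
  have hTail : ∀ k : ℕ, HasSum (fun n => b (n + k)) (G k) := by
    intro k
    have h := tele_hasSum (g := fun n => G (n + k))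
      (fun n => by
        show G (n+1+k) ≤ G (n+k)
        rw [show n+1+k = (n+k)+1 by omega]
        exact hGmono (n+k))
      (hGlim.comp (tendsto_add_atTop_nat k))
    have hfun : (fun n => b (n + k)) = fun n => G (n+k) - G (n+1+k) := by
      funext n
      simp only [hbdef]
      rw [show n+k+1 = n+1+k by omega]
    rw [hfun, show G k = G (0+k) by rw [Nat.zero_add]]
    exact h
  have hble : ∀ N : ℕ, b N ≤ lam * ((N:ℝ)+1) ^ (-lam - 1) := by
    intro N
    have h := rpow_diff_le hlam0.le (a := (N:ℝ)+1)
      (by have := Nat.cast_nonneg (α := ℝ) N; linarith)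
    have hbN : b N = ((N:ℝ)+1) ^ (-lam) - ((N:ℝ)+1+1) ^ (-lam) := by
      simp only [hbdef, hGdef]
      push_cast
      ring_nf
    rw [hbN]
    exact h
  have hw : Summable (fun N : ℕ => ((N:ℝ)+1) ^ (-(lam+δ))) := by
    have h : Summable (fun N : ℕ => ((N+1:ℕ):ℝ) ^ (-(lam+δ))) :=
      (summable_nat_add_iff 1).mpr (Real.summable_nat_rpow.mpr (by linarith))
    simpa using h
  refine ⟨|C| * lam * ∑' N : ℕ, ((N:ℝ)+1) ^ (-(lam+δ)), ?_⟩
  intro f hf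
  have hfp0 : 0 ≤ lpNorm p f :=
    Real.rpow_nonneg (tsum_nonneg (fun x => Real.rpow_nonneg (norm_nonneg _) _)) _
  -- finite support of averages
  have hsupp : ∀ N : ℕ, (Function.support (avg P N f)).Finite := by
    intro N
    apply Set.Finite.subset ((Set.finite_Icc (1:ℤ) (N:ℤ)).biUnion
      (fun k _ => hf.image (fun y => y - P.eval k)))
    intro x hx
    have hx' : avg P N f x ≠ 0 := hx
    rw [avg] at hx'
    have hsum : ∑ k ∈ Finset.Icc (1:ℤ) (N:ℤ), f (x + P.eval k) ≠ 0 := by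
      intro h; exact hx' (by rw [h, mul_zero])
    obtain ⟨k, hk, hfk⟩ := Finset.exists_ne_zero_of_sum_ne_zero hsum
    refine Set.mem_biUnion (by simpa [Finset.mem_Icc, Set.mem_Icc] using hk) ?_
    exact ⟨x + P.eval k, hfk, by ring⟩
  have hmem : ∀ N : ℕ, Memℓp (avg P N f) Q := by
    intro N
    apply memℓp_gen
    apply summable_of_ne_finset_zero (s := (hsupp N).toFinset)
    intro x hx
    have h0 : avg P N f x = 0 := by
      by_contra h
      exact hx ((hsupp N).mem_toFinset.mpr h)
    rw [h0, norm_zero, Real.zero_rpow (by rw [hQt]; exact hq0.ne')]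
  set g : ℕ → lp (fun _ : ℤ => ℂ) Q := fun N => ⟨avg P (N+1) f, hmem (N+1)⟩ with hgdef
  have hgcoe : ∀ (N : ℕ) (x : ℤ), (g N : ℤ → ℂ) x = avg P (N+1) f x := fun N x => rfl
  have hgnorm : ∀ N, ‖g N‖ = lpNorm q (avg P (N+1) f) := by
    intro N
    rw [lp.norm_eq_tsum_rpow hQpos, hQt]
    rfl
  set a : ℕ → ℝ := fun N => ((N:ℝ)+1) * b N with hadef
  set u : ℕ → lp (fun _ : ℤ => ℂ) Q := fun N => a N • g N with hudef
  have hanonneg : ∀ N, 0 ≤ a N := fun N => mul_nonneg (by positivity) (hbnonneg N)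
  have key : ∀ N, ‖u N‖ ≤ (|C| * lam * lpNorm p f) * (((N:ℝ)+1) ^ (-(lam+δ))) := by
    intro N
    have hx : (0:ℝ) < (N:ℝ)+1 := by positivity
    have h1 : ‖u N‖ = a N * ‖g N‖ := by
      rw [hudef]
      simp only
      rw [lp.norm_const_smul hQ0, Real.norm_eq_abs, abs_of_nonneg (hanonneg N)]
    have h2' := hA (N+1) (Nat.le_add_left 1 N) f hf
    have hcast : ((N+1 : ℕ):ℝ) = (N:ℝ)+1 := by push_cast; ring
    rw [hcast] at h2'
    have h2 : ‖g N‖ ≤ C * ((N:ℝ)+1) ^ (-δ) * lpNorm p f := by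
      rw [hgnorm N]; exact h2'
    have haN : a N ≤ lam * ((N:ℝ)+1) ^ (-lam) := by
      have heq : ((N:ℝ)+1) * (lam * ((N:ℝ)+1) ^ (-lam-1)) = lam * ((N:ℝ)+1) ^ (-lam) := by
        rw [show (-lam) = 1 + (-lam-1) by ring, Real.rpow_add hx, Real.rpow_one]; ring
      calc a N ≤ ((N:ℝ)+1) * (lam * ((N:ℝ)+1) ^ (-lam-1)) :=
            mul_le_mul_of_nonneg_left (hble N) (by positivity)
      _ = _ := heq
    have hr : (0:ℝ) ≤ ((N:ℝ)+1) ^ (-δ) := Real.rpow_nonneg hx.le _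
    calc ‖u N‖ = a N * ‖g N‖ := h1
    _ ≤ a N * (C * ((N:ℝ)+1) ^ (-δ) * lpNorm p f) :=
        mul_le_mul_of_nonneg_left h2 (hanonneg N)
    _ ≤ a N * (|C| * ((N:ℝ)+1) ^ (-δ) * lpNorm p f) := by
        apply mul_le_mul_of_nonneg_left _ (hanonneg N)
        apply mul_le_mul_of_nonneg_right _ hfp0
        exact mul_le_mul_of_nonneg_right (le_abs_self C) hr
    _ ≤ (lam * ((N:ℝ)+1) ^ (-lam)) * (|C| * ((N:ℝ)+1) ^ (-δ) * lpNorm p f) := by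
        apply mul_le_mul_of_nonneg_right haN
        positivity
    _ = (|C| * lam * lpNorm p f) * (((N:ℝ)+1) ^ (-(lam+δ))) := by
        rw [show -(lam+δ) = (-lam) + (-δ) by ring, Real.rpow_add hx]; ring
  have husum : Summable (fun N => ‖u N‖) :=
    Summable.of_nonneg_of_le (fun N => norm_nonneg _) key (hw.mul_left _)
  have hU : Summable u := husum.of_norm
  set S : lp (fun _ : ℤ => ℂ) Q := ∑' N, u N with hSdef
  have hSsum : HasSum u S := hU.hasSum
  have hSnorm : ‖S‖ ≤ ∑' N, ‖u N‖ := norm_tsum_le_tsum_norm husum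
  have htsum : ∑' N, ‖u N‖ ≤
      (|C| * lam * lpNorm p f) * ∑' N : ℕ, ((N:ℝ)+1) ^ (-(lam+δ)) := by
    calc ∑' N, ‖u N‖
        ≤ ∑' N : ℕ, (|C| * lam * lpNorm p f) * (((N:ℝ)+1) ^ (-(lam+δ))) :=
          Summable.tsum_le_tsum key husum (hw.mul_left _)
    _ = _ := tsum_mul_left
  -- evaluation
  have heval : ∀ x : ℤ, HasSum (fun N => (u N : ℤ → ℂ) x) (S x) := by
    intro x
    let ev : lp (fun _ : ℤ => ℂ) Q →ₗ[ℝ] ℂ :=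
      { toFun := fun F => F x
        map_add' := fun F G => rfl
        map_smul' := fun cc F => rfl }
    have hbd : ∀ F : lp (fun _ : ℤ => ℂ) Q, ‖ev F‖ ≤ 1 * ‖F‖ := by
      intro F
      rw [one_mul]; exact lp.norm_apply_le_norm hQ0 F x
    exact (LinearMap.mkContinuous ev 1 hbd).hasSum hSsum
  -- pointwise identity
  have hpoint : ∀ x : ℤ, frac P lam f x = S x := by
    intro x
    set c : ℕ → ℂ := fun k => f (x + P.eval ((k:ℤ)+1)) with hcdef
    -- existence of a cutoff
    obtain ⟨K, hK⟩ : ∃ K : ℕ, ∀ k, K ≤ k → c k = 0 := by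
      set Sf : Finset ℤ := hf.toFinset with hSfdef
      set B : ℕ := Sf.sup (fun y => (y - x).natAbs) with hBdef
      have hdeg : 0 < (P.map (Int.castRingHom ℝ)).degree := by
        rw [Polynomial.degree_map_eq_of_injective Int.cast_injective]
        exact Polynomial.natDegree_pos_iff_degree_pos.mp (by omega)
      have htend : Tendsto
          (fun k : ℕ => |Polynomial.eval ((k:ℝ)+1) (P.map (Int.castRingHom ℝ))|) atTop atTop :=
        (Polynomial.abs_tendsto_atTop _ hdeg).comp
          (tendsto_atTop_add_const_right atTop (1:ℝ) tendsto_natCast_atTop_atTop)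
      obtain ⟨K, hK⟩ := Filter.eventually_atTop.mp (htend.eventually_gt_atTop (B:ℝ))
      refine ⟨K, fun k hk => ?_⟩
      by_contra hne
      have hmemS : x + P.eval ((k:ℤ)+1) ∈ Sf := hf.mem_toFinset.mpr hne
      have hle : ((x + P.eval ((k:ℤ)+1)) - x).natAbs ≤ B :=
        Finset.le_sup (f := fun y => (y - x).natAbs) hmemS
      have hev : Polynomial.eval ((k:ℝ)+1) (P.map (Int.castRingHom ℝ))
          = ((P.eval ((k:ℤ)+1) : ℤ) : ℝ) := by
        have hc : ((k:ℝ)+1) = (((k:ℤ)+1 : ℤ) : ℝ) := by push_cast; ring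
        rw [hc, Polynomial.eval_intCast_map]
        rfl
      have hgt := hK k hk
      rw [hev] at hgt
      have habs : |((P.eval ((k:ℤ)+1) : ℤ) : ℝ)| = (((P.eval ((k:ℤ)+1)).natAbs : ℕ) : ℝ) := by
        simp [Nat.cast_natAbs]
      rw [habs] at hgt
      have hlt : B < (P.eval ((k:ℤ)+1)).natAbs := by exact_mod_cast hgt
      have heq3 : ((x + P.eval ((k:ℤ)+1)) - x) = P.eval ((k:ℤ)+1) := by ring
      rw [heq3] at hle
      omega
    -- sums over Icc vs range
    have hIcc : ∀ M : ℕ, ∑ j ∈ Finset.Icc (1:ℤ) (M:ℤ), f (x + P.eval j)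
        = ∑ k ∈ Finset.range M, c k := by
      intro M
      induction M with
      | zero => simp
      | succ M ih =>
        have hins : Finset.Icc (1:ℤ) ((M+1:ℕ):ℤ) = insert ((M:ℤ)+1) (Finset.Icc (1:ℤ) (M:ℤ)) := by
          ext j
          simp only [Finset.mem_Icc, Finset.mem_insert]
          push_cast
          omega
        have hnotmem : ((M:ℤ)+1) ∉ Finset.Icc (1:ℤ) (M:ℤ) := by
          simp only [Finset.mem_Icc]
          omega
        rw [hins, Finset.sum_insert hnotmem, Finset.sum_range_succ, ih]
        rw [add_comm]
    have havgx : ∀ N : ℕ, (u N : ℤ → ℂ) x = ((b N : ℝ):ℂ) * ∑ k ∈ Finset.range (N+1), c k := by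
      intro N
      have h1 : (u N : ℤ → ℂ) x = (a N : ℝ) • ((g N : ℤ → ℂ) x) := by
        rw [hudef]; rw [lp.coeFn_smul]; rfl
      rw [h1, hgcoe, avg, hIcc (N+1)]
      rw [Complex.real_smul, hadef]
      have hne : ((N:ℂ)+1) ≠ 0 := by
        have := Nat.cast_add_one_ne_zero (R := ℂ) N
        simpa using this
      have hcast : ((N+1 : ℕ):ℂ) = (N:ℂ)+1 := by push_cast; ring
      rw [hcast]
      push_cast
      field_simp
    have hfin : ∀ N : ℕ, ∑ k ∈ Finset.range (N+1), c k
        = ∑ k ∈ Finset.range K, (if k ≤ N then c k else 0) := by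
      intro N
      have hcong : ∀ k ∈ Finset.range K, (if k ≤ N then c k else 0)
          = (if k ∈ Finset.range (N+1) then c k else 0) := by
        intro k _
        simp [Finset.mem_range, Nat.lt_succ_iff]
      rw [Finset.sum_congr rfl hcong, Finset.sum_ite_mem]
      apply (Finset.sum_subset Finset.inter_subset_right ?_).symm
      intro k hk1 hk2
      apply hK
      by_contra h
      push_neg at h
      exact hk2 (Finset.mem_inter.mpr ⟨Finset.mem_range.mpr h, hk1⟩)
    have hstep : ∀ k : ℕ, HasSum (fun N => (if k ≤ N then ((b N:ℝ):ℂ) * c k else 0))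
        (((G k : ℝ):ℂ) * c k) := by
      intro k
      have t1 : HasSum (fun n => ((b (n + k) : ℝ):ℂ)) ((G k : ℝ):ℂ) :=
        Complex.ofRealCLM.hasSum (hTail k)
      have t2 := t1.mul_right (c k)
      have t3 : (fun n => (if k ≤ n + k then ((b (n+k):ℝ):ℂ) * c k else 0))
          = fun n => ((b (n+k):ℝ):ℂ) * c k := by
        funext n; rw [if_pos (Nat.le_add_left k n)]
      have t4 := (hasSum_nat_add_iff
        (f := fun N => if k ≤ N then ((b N:ℝ):ℂ) * c k else 0) k).mp (by rw [t3]; exact t2)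
      have t5 : ∑ i ∈ Finset.range k, (if k ≤ i then ((b i:ℝ):ℂ) * c k else 0) = 0 := by
        apply Finset.sum_eq_zero
        intro i hi
        rw [if_neg]
        simp only [Finset.mem_range] at hi
        omega
      rw [t5, add_zero] at t4
      exact t4
    have hall : HasSum (fun N => ∑ k ∈ Finset.range K, (if k ≤ N then ((b N:ℝ):ℂ) * c k else 0))
        (∑ k ∈ Finset.range K, ((G k:ℝ):ℂ) * c k) := hasSum_sum (fun k _ => hstep k)
    have heq2 : (fun N => ∑ k ∈ Finset.range K, (if k ≤ N then ((b N:ℝ):ℂ) * c k else 0))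
        = fun N => (u N : ℤ → ℂ) x := by
      funext N
      rw [havgx N, hfin N, Finset.mul_sum]
      apply Finset.sum_congr rfl
      intro k _
      split <;> simp
    rw [heq2] at hall
    have hfrac : frac P lam f x = ∑ k ∈ Finset.range K, ((G k:ℝ):ℂ) * c k := by
      rw [frac]
      apply tsum_eq_sum
      intro k hk
      have hck : c k = 0 := hK k (by simpa using hk)
      have : f (x + P.eval ((k:ℤ)+1)) = 0 := hck
      rw [this, mul_zero]
    rw [hfrac]
    exact hall.unique (heval x)
  -- conclusion
  have hSc : frac P lam f = (S : ℤ → ℂ) := funext hpoint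
  have hSn : lpNorm q (frac P lam f) = ‖S‖ := by
    rw [hSc, lp.norm_eq_tsum_rpow hQpos, hQt]
    rfl
  rw [hSn]
  calc ‖S‖ ≤ ∑' N, ‖u N‖ := hSnorm
  _ ≤ (|C| * lam * lpNorm p f) * ∑' N : ℕ, ((N:ℝ)+1) ^ (-(lam+δ)) := htsum
  _ = (|C| * lam * ∑' N : ℕ, ((N:ℝ)+1) ^ (-(lam+δ))) * lpNorm p f := by ring
end

section
/- Let P(x) = a x² + b x + c with a ≥ 1 and b, c ≥ 0 integers. For every nonnegative f : ℤ → [0,∞) supported in [-(aN² + bN + b²/(4a)), aN² + bN + b²/(4a)], defining g : ℤ → [0,∞) by g(4am) = f(m) and g(n) = 0 when 4a ∤ n, one has the pointwise inequality A_N^P f(x) ≤ (2a + b/N) · A_{2aN+b}^{Q} g(4a(x+c) - b²) for all x ∈ ℤ, where Q(k) = k². -/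
open Finset

theorem stmt_2 (a b c : ℤ) (ha : 1 ≤ a) (hb : 0 ≤ b) (hc : 0 ≤ c)
    (N : ℕ) (hN : 1 ≤ N)
    (f : ℤ → ℝ) (hf0 : ∀ x, 0 ≤ f x)
    (hsupp : ∀ m : ℤ, f m ≠ 0 →
      |(m : ℝ)| ≤ (a : ℝ) * (N : ℝ) ^ 2 + (b : ℝ) * (N : ℝ) + (b : ℝ) ^ 2 / (4 * (a : ℝ)))
    (g : ℤ → ℝ)
    (hg1 : ∀ m : ℤ, g (4 * a * m) = f m)
    (hg2 : ∀ n : ℤ, ¬ (4 * a ∣ n) → g n = 0) :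
    ∀ x : ℤ,
      (N : ℝ)⁻¹ * ∑ n ∈ Finset.Icc (1 : ℤ) (N : ℤ), f (x + a * n ^ 2 + b * n + c) ≤
        (2 * (a : ℝ) + (b : ℝ) / (N : ℝ)) *
          (((2 * a * (N : ℤ) + b : ℤ) : ℝ)⁻¹ *
            ∑ k ∈ Finset.Icc (1 : ℤ) (2 * a * (N : ℤ) + b),
              g (4 * a * (x + c) - b ^ 2 + k ^ 2)) := by
  intro x
  have hNZ : (1 : ℤ) ≤ (N : ℤ) := by exact_mod_cast hN
  have hMpos : (0 : ℤ) < 2 * a * (N : ℤ) + b := by nlinarith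
  have hNR : (0 : ℝ) < (N : ℝ) := by exact_mod_cast lt_of_lt_of_le one_pos hNZ
  have hMR : (0 : ℝ) < ((2 * a * (N : ℤ) + b : ℤ) : ℝ) := by exact_mod_cast hMpos
  have hg_nonneg : ∀ n : ℤ, 0 ≤ g n := by
    intro n
    by_cases h : (4 * a) ∣ n
    · obtain ⟨m, rfl⟩ := h
      rw [hg1]; exact hf0 m
    · rw [hg2 n h]
  have key : ∑ n ∈ Finset.Icc (1 : ℤ) (N : ℤ), f (x + a * n ^ 2 + b * n + c) ≤
      ∑ k ∈ Finset.Icc (1 : ℤ) (2 * a * (N : ℤ) + b),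
        g (4 * a * (x + c) - b ^ 2 + k ^ 2) := by
    have himg : ∑ n ∈ Finset.Icc (1 : ℤ) (N : ℤ), f (x + a * n ^ 2 + b * n + c)
        = ∑ k ∈ (Finset.Icc (1 : ℤ) (N : ℤ)).image (fun n => 2 * a * n + b),
            g (4 * a * (x + c) - b ^ 2 + k ^ 2) := by
      rw [Finset.sum_image (fun n _ m _ h => by
        have h2a : (2 * a) ≠ 0 := by positivity
        have : 2 * a * n = 2 * a * m := by linarith
        exact mul_left_cancel₀ h2a this)]
      apply Finset.sum_congr rfl
      intro n _
      have harg : 4 * a * (x + c) - b ^ 2 + (2 * a * n + b) ^ 2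
          = 4 * a * (x + a * n ^ 2 + b * n + c) := by ring
      rw [harg, hg1]
    rw [himg]
    apply Finset.sum_le_sum_of_subset_of_nonneg
    · intro k hk
      simp only [Finset.mem_image, Finset.mem_Icc] at hk ⊢
      obtain ⟨n, ⟨hn1, hn2⟩, rfl⟩ := hk
      constructor <;> nlinarith
    · intro k _ _; exact hg_nonneg _
  have hcoef : (2 * (a : ℝ) + (b : ℝ) / (N : ℝ))
      = ((2 * a * (N : ℤ) + b : ℤ) : ℝ) / (N : ℝ) := by
    push_cast
    field_simp
  rw [hcoef]
  calc (N : ℝ)⁻¹ * ∑ n ∈ Finset.Icc (1 : ℤ) (N : ℤ), f (x + a * n ^ 2 + b * n + c)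
      ≤ (N : ℝ)⁻¹ * ∑ k ∈ Finset.Icc (1 : ℤ) (2 * a * (N : ℤ) + b),
          g (4 * a * (x + c) - b ^ 2 + k ^ 2) := by
        exact mul_le_mul_of_nonneg_left key (by positivity)
    _ = ((2 * a * (N : ℤ) + b : ℤ) : ℝ) / (N : ℝ) *
          (((2 * a * (N : ℤ) + b : ℤ) : ℝ)⁻¹ *
            ∑ k ∈ Finset.Icc (1 : ℤ) (2 * a * (N : ℤ) + b),
              g (4 * a * (x + c) - b ^ 2 + k ^ 2)) := by
        field_simp
end

section
/- Let P(x) = a x² + b x + c with a ≥ 1, b, c ≥ 0 integers, and suppose that for some 3/2 < p ≤ 2 there is a constant C_p with ‖A_M^{k²} g‖_{ℓ^{p'}(ℤ)} ≤ C_p M^{-2(1/p - 1/p')} ‖g‖_{ℓ^p(ℤ)} for all M ∈ ℕ and all finitely supported g (the Stein–Wainger estimate for the squares). Then for all N ∈ ℕ and finitely supported f, ‖A_N^P f‖_{ℓ^{p'}(ℤ)} ≤ C_p (2a + b/N)(2aN + b)^{-2(1/p - 1/p')} ‖f‖_{ℓ^p(ℤ)}. -/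
open Finset

/-- Averaging operator along the squares. -/
noncomputable def sqAvg (M : ℕ) (g : ℤ → ℂ) (x : ℤ) : ℂ :=
  (M : ℂ)⁻¹ * ∑ k ∈ Finset.Icc (1 : ℤ) (M : ℤ), g (x + k ^ 2)

/-- Averaging operator along the quadratic polynomial `a x² + b x + c`. -/
noncomputable def quadAvg (a b c : ℤ) (N : ℕ) (f : ℤ → ℂ) (x : ℤ) : ℂ :=
  (N : ℂ)⁻¹ * ∑ n ∈ Finset.Icc (1 : ℤ) (N : ℤ), f (x + a * n ^ 2 + b * n + c)

lemma fin_supp_avg (c : ℂ) (s : Finset ℤ) (e : ℤ → ℤ) {f : ℤ → ℂ}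
    (hf : (Function.support f).Finite) :
    (Function.support (fun x => c * ∑ n ∈ s, f (x + e n))).Finite := by
  apply Set.Finite.subset (s.finite_toSet.biUnion
    (fun n _ => hf.image (fun y => y - e n)))
  intro x hx
  simp only [Function.mem_support] at hx
  by_contra hxn
  apply hx
  have h0 : ∀ n ∈ s, f (x + e n) = 0 := by
    intro n hn
    by_contra h0
    exact hxn (Set.mem_biUnion hn ⟨x + e n, h0, by ring⟩)
  rw [Finset.sum_eq_zero h0, mul_zero]

lemma summable_rpow_of_fin {h : ℤ → ℂ} (hh : (Function.support h).Finite) {q : ℝ}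
    (hq : q ≠ 0) : Summable (fun x => ‖h x‖ ^ q) := by
  apply summable_of_ne_finset_zero (s := hh.toFinset)
  intro x hx
  have h0 : h x = 0 := by
    by_contra h0
    exact hx (hh.mem_toFinset.mpr h0)
  simp [h0, Real.zero_rpow hq]

lemma lpNorm_le_comp {q : ℝ} (hq : 0 < q) (u v : ℤ → ℂ) (z : ℤ → ℤ)
    (hz : Function.Injective z) {C : ℝ} (hC : 0 ≤ C)
    (hu : (Function.support u).Finite) (hv : (Function.support v).Finite)
    (h : ∀ x, ‖u x‖ ≤ C * ‖v (z x)‖) : lpNorm q u ≤ C * lpNorm q v := by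
  have hsu : Summable (fun x => ‖u x‖ ^ q) := summable_rpow_of_fin hu hq.ne'
  have hsv : Summable (fun x => ‖v x‖ ^ q) := summable_rpow_of_fin hv hq.ne'
  have hsvz : Summable (fun x => ‖v (z x)‖ ^ q) := by
    apply summable_of_ne_finset_zero (s := (hv.preimage (hz.injOn)).toFinset)
    intro x hx
    have h0 : v (z x) = 0 := by
      by_contra h0
      exact hx ((hv.preimage (hz.injOn)).mem_toFinset.mpr h0)
    simp [h0, Real.zero_rpow hq.ne']
  have h1 : ∑' x, ‖u x‖ ^ q ≤ C ^ q * ∑' x, ‖v (z x)‖ ^ q := by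
    rw [← tsum_mul_left]
    refine Summable.tsum_le_tsum (fun x => ?_) hsu (hsvz.mul_left _)
    calc ‖u x‖ ^ q ≤ (C * ‖v (z x)‖) ^ q :=
          Real.rpow_le_rpow (norm_nonneg _) (h x) hq.le
      _ = C ^ q * ‖v (z x)‖ ^ q := Real.mul_rpow hC (norm_nonneg _)
  have h2 : ∑' x, ‖v (z x)‖ ^ q ≤ ∑' y, ‖v y‖ ^ q := by
    refine Summable.tsum_le_tsum_of_inj z hz (fun y _ => Real.rpow_nonneg (norm_nonneg _) _)
      (fun x => le_rfl) hsvz hsv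
  have h3 : ∑' x, ‖u x‖ ^ q ≤ C ^ q * ∑' y, ‖v y‖ ^ q :=
    h1.trans (by
      have := mul_le_mul_of_nonneg_left h2 (Real.rpow_nonneg hC q)
      linarith)
  have hvnn : 0 ≤ ∑' y, ‖v y‖ ^ q :=
    tsum_nonneg (fun y => Real.rpow_nonneg (norm_nonneg _) _)
  calc lpNorm q u = (∑' x, ‖u x‖ ^ q) ^ (1/q) := rfl
    _ ≤ (C ^ q * ∑' y, ‖v y‖ ^ q) ^ (1/q) := by
        apply Real.rpow_le_rpow (tsum_nonneg (fun x => Real.rpow_nonneg (norm_nonneg _) _)) h3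
        positivity
    _ = C * lpNorm q v := by
        rw [Real.mul_rpow (Real.rpow_nonneg hC q) hvnn,
          ← Real.rpow_mul hC, mul_one_div_cancel hq.ne', Real.rpow_one]
        rfl

lemma lpNorm_comp_eq {q : ℝ} (hq : q ≠ 0) (v : ℤ → ℂ) (z : ℤ → ℤ)
    (hz : Function.Injective z) (hsupp : Function.support v ⊆ Set.range z) :
    lpNorm q (fun x => v (z x)) = lpNorm q v := by
  unfold lpNorm
  congr 1
  have hs : Function.support (fun y => ‖v y‖ ^ q) ⊆ Set.range z := by
    intro y hy
    apply hsupp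
    simp only [Function.mem_support] at hy ⊢
    intro h0
    simp [h0, Real.zero_rpow hq] at hy
  exact hz.tsum_eq (f := fun y => ‖v y‖ ^ q) hs

theorem stmt_3 (a b c : ℤ) (ha : 1 ≤ a) (hb : 0 ≤ b) (hc : 0 ≤ c)
    (p p' : ℝ) (hp1 : 3 / 2 < p) (hp2 : p ≤ 2) (hp' : p' = p / (p - 1)) (Cp : ℝ)
    (hSW : ∀ M : ℕ, 1 ≤ M → ∀ g : ℤ → ℂ, (Function.support g).Finite →
      lpNorm p' (sqAvg M g) ≤ Cp * (M : ℝ) ^ (-(2 * (1 / p - 1 / p'))) * lpNorm p g) :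
    ∀ N : ℕ, 1 ≤ N → ∀ f : ℤ → ℂ, (Function.support f).Finite →
      lpNorm p' (quadAvg a b c N f) ≤
        Cp * (2 * (a : ℝ) + (b : ℝ) / (N : ℝ)) *
          (2 * (a : ℝ) * (N : ℝ) + (b : ℝ)) ^ (-(2 * (1 / p - 1 / p'))) * lpNorm p f := by
  intro N hN f hf
  have hp0 : (0:ℝ) < p := by linarith
  have hp'0 : (0:ℝ) < p' := by
    rw [hp']; apply div_pos (by linarith) (by linarith)
  -- basic positivity
  have hNZ : (1:ℤ) ≤ (N:ℤ) := by exact_mod_cast hN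
  have hNr : (1:ℝ) ≤ (N:ℝ) := by exact_mod_cast hN
  have hNr0 : (0:ℝ) < (N:ℝ) := by linarith
  have hD0 : (0:ℤ) < 4*a := by linarith
  -- M
  set Mz : ℤ := 2*a*N + b with hMz
  have hMz1 : (1:ℤ) ≤ Mz := by nlinarith
  set M : ℕ := Mz.toNat with hMdef
  have hMcast : (M:ℤ) = Mz := Int.toNat_of_nonneg (by linarith)
  have hM1 : 1 ≤ M := by omega
  have hMr : (M:ℝ) = 2*(a:ℝ)*(N:ℝ) + (b:ℝ) := by
    have h := hMcast
    rw [hMz] at h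
    exact_mod_cast congrArg (fun t : ℤ => (t:ℝ)) h
  have hMr0 : (0:ℝ) < (M:ℝ) := by
    have : (1:ℝ) ≤ (M:ℝ) := by exact_mod_cast hM1
    linarith
  -- the rescaled nonnegative function
  set G : ℤ → ℝ := fun y => if (4*a) ∣ y then ‖f (y / (4*a))‖ else 0 with hG
  set F : ℤ → ℂ := fun y => ((G y : ℝ) : ℂ) with hF
  have hGnn : ∀ y, 0 ≤ G y := by
    intro y; simp only [hG]
    split <;> simp [norm_nonneg]
  have hGmul : ∀ y : ℤ, G (4*a*y) = ‖f y‖ := by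
    intro y
    simp only [hG]
    rw [if_pos (Dvd.intro y rfl), Int.mul_ediv_cancel_left _ hD0.ne']
  have hFnorm : ∀ y, ‖F y‖ = G y := by
    intro y
    simp only [hF, Complex.norm_real]
    exact abs_of_nonneg (hGnn y)
  have hFsupp : (Function.support F).Finite := by
    apply Set.Finite.subset (hf.image (fun y => 4*a*y))
    intro y hy
    simp only [Function.mem_support, hF, hG] at hy
    by_cases hd : (4*a) ∣ y
    · obtain ⟨m, rfl⟩ := hd
      refine ⟨m, ?_, rfl⟩
      simp only [Function.mem_support]
      intro h0
      apply hy
      rw [if_pos (Dvd.intro m rfl), Int.mul_ediv_cancel_left _ hD0.ne', h0]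
      simp
    · exact absurd (by rw [if_neg hd]; simp) hy
  -- z map
  set z : ℤ → ℤ := fun x => 4*a*x + 4*a*c - b^2 with hzdef
  have hzinj : Function.Injective z := by
    intro x y hxy
    simp only [hzdef] at hxy
    have : 4*a*x = 4*a*y := by linarith
    exact mul_left_cancel₀ hD0.ne' this
  have hkey : ∀ x n : ℤ, G (z x + (2*a*n+b)^2) = ‖f (x + a*n^2 + b*n + c)‖ := by
    intro x n
    have : z x + (2*a*n+b)^2 = 4*a*(x + a*n^2 + b*n + c) := by
      simp only [hzdef]; ring
    rw [this, hGmul]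
  -- support finiteness of the two averages
  have hqsupp : (Function.support (quadAvg a b c N f)).Finite := by
    have heq : quadAvg a b c N f =
        fun x => (N:ℂ)⁻¹ * ∑ n ∈ Finset.Icc (1:ℤ) (N:ℤ), f (x + (a*n^2 + b*n + c)) := by
      funext x
      unfold quadAvg
      congr 1
      apply Finset.sum_congr rfl
      intro n _
      congr 1
      ring
    rw [heq]
    exact fin_supp_avg _ _ _ hf
  have hssupp : (Function.support (sqAvg M F)).Finite := by
    have heq : sqAvg M F = fun x => (M:ℂ)⁻¹ * ∑ k ∈ Finset.Icc (1:ℤ) (M:ℤ), F (x + k^2) := rfl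
    rw [heq]
    exact fin_supp_avg _ _ _ hFsupp
  -- pointwise bound
  have hpt : ∀ x : ℤ, ‖quadAvg a b c N f x‖ ≤ ((M:ℝ)/(N:ℝ)) * ‖sqAvg M F (z x)‖ := by
    intro x
    -- compute the sq side
    have hsum : ∑ k ∈ Finset.Icc (1:ℤ) (M:ℤ), F (z x + k^2)
        = ((∑ k ∈ Finset.Icc (1:ℤ) (M:ℤ), G (z x + k^2) : ℝ) : ℂ) := by
      push_cast
      rfl
    have hsqnorm : ‖sqAvg M F (z x)‖
        = (M:ℝ)⁻¹ * ∑ k ∈ Finset.Icc (1:ℤ) (M:ℤ), G (z x + k^2) := by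
      unfold sqAvg
      rw [hsum, norm_mul, norm_inv, Complex.norm_natCast, Complex.norm_real,
        Real.norm_of_nonneg (Finset.sum_nonneg (fun k _ => hGnn _))]
    -- quad side
    have hquad : ‖quadAvg a b c N f x‖ ≤
        (N:ℝ)⁻¹ * ∑ n ∈ Finset.Icc (1:ℤ) (N:ℤ), G (z x + (2*a*n+b)^2) := by
      unfold quadAvg
      rw [norm_mul, norm_inv, Complex.norm_natCast]
      apply mul_le_mul_of_nonneg_left _ (by positivity)
      calc ‖∑ n ∈ Finset.Icc (1:ℤ) (N:ℤ), f (x + a*n^2 + b*n + c)‖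
          ≤ ∑ n ∈ Finset.Icc (1:ℤ) (N:ℤ), ‖f (x + a*n^2 + b*n + c)‖ := norm_sum_le _ _
        _ = ∑ n ∈ Finset.Icc (1:ℤ) (N:ℤ), G (z x + (2*a*n+b)^2) := by
            apply Finset.sum_congr rfl
            intro n _
            rw [hkey]
    -- image comparison
    have himg : ∑ n ∈ Finset.Icc (1:ℤ) (N:ℤ), G (z x + (2*a*n+b)^2)
        ≤ ∑ k ∈ Finset.Icc (1:ℤ) (M:ℤ), G (z x + k^2) := by
      have hinj : ∀ n ∈ Finset.Icc (1:ℤ) (N:ℤ), ∀ m ∈ Finset.Icc (1:ℤ) (N:ℤ),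
          2*a*n+b = 2*a*m+b → n = m := by
        intro n _ m _ hnm
        have h2 : 2*a*n = 2*a*m := by linarith
        exact mul_left_cancel₀ (by linarith : (2*a:ℤ) ≠ 0) h2
      rw [← Finset.sum_image (f := fun k => G (z x + k^2)) (g := fun n => 2*a*n+b) hinj]
      apply Finset.sum_le_sum_of_subset_of_nonneg
      · intro k hk
        simp only [Finset.mem_image, Finset.mem_Icc] at hk ⊢
        obtain ⟨n, ⟨hn1, hn2⟩, rfl⟩ := hk
        constructor
        · nlinarith
        · rw [hMcast, hMz]; nlinarith
      · intro k _ _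
        exact hGnn _
    rw [hsqnorm]
    have heq : ((M:ℝ)/(N:ℝ)) * ((M:ℝ)⁻¹ * ∑ k ∈ Finset.Icc (1:ℤ) (M:ℤ), G (z x + k^2))
        = (N:ℝ)⁻¹ * ∑ k ∈ Finset.Icc (1:ℤ) (M:ℤ), G (z x + k^2) := by
      field_simp
    rw [heq]
    exact hquad.trans (mul_le_mul_of_nonneg_left himg (by positivity))
  -- main chain
  have hstep1 : lpNorm p' (quadAvg a b c N f) ≤ ((M:ℝ)/(N:ℝ)) * lpNorm p' (sqAvg M F) :=
    lpNorm_le_comp hp'0 _ _ z hzinj (by positivity) hqsupp hssupp hpt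
  have hstep2 := hSW M hM1 F hFsupp
  have hFlp : lpNorm p F = lpNorm p f := by
    have h1 : lpNorm p (fun x => F (4*a*x)) = lpNorm p F := by
      apply lpNorm_comp_eq hp0.ne' F (fun x => 4*a*x)
      · intro x y hxy
        exact mul_left_cancel₀ hD0.ne' hxy
      · intro y hy
        simp only [Function.mem_support, hF, hG] at hy
        by_cases hd : (4*a) ∣ y
        · obtain ⟨m, rfl⟩ := hd
          exact ⟨m, rfl⟩
        · exact absurd (by rw [if_neg hd]; simp) hy
    rw [← h1]
    unfold lpNorm
    congr 1
    apply tsum_congr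
    intro x
    rw [hFnorm, hGmul]
  rw [hFlp] at hstep2
  have hfinal : lpNorm p' (quadAvg a b c N f) ≤
      ((M:ℝ)/(N:ℝ)) * (Cp * (M:ℝ) ^ (-(2 * (1 / p - 1 / p'))) * lpNorm p f) :=
    hstep1.trans (mul_le_mul_of_nonneg_left hstep2 (by positivity))
  have hMN : (M:ℝ)/(N:ℝ) = 2*(a:ℝ) + (b:ℝ)/(N:ℝ) := by
    rw [hMr]
    field_simp
  calc lpNorm p' (quadAvg a b c N f)
      ≤ ((M:ℝ)/(N:ℝ)) * (Cp * (M:ℝ) ^ (-(2 * (1 / p - 1 / p'))) * lpNorm p f) := hfinal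
    _ = Cp * (2 * (a:ℝ) + (b:ℝ) / (N:ℝ)) *
        (2 * (a:ℝ) * (N:ℝ) + (b:ℝ)) ^ (-(2 * (1 / p - 1 / p'))) * lpNorm p f := by
        rw [hMN, hMr]
        ring
end

section
/- For the averaging operator A_N along a polynomial P of degree d with positive leading coefficient, taking f = 𝟙_{{P(1), P(2), …, P(N)}} gives ‖A_N f‖_{ℓ^q} / ‖f‖_{ℓ^p} ≥ N^{-1/p}. Consequently, if the improving inequality ‖A_N f‖_{ℓ^q} ≤ C N^{-d(1/p - 1/q)} ‖f‖_{ℓ^p} holds for all N, then d/q ≥ (d-1)/p. -/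
open Finset

/-- ℓ^p norm (finite real exponent) of a real-valued function on ℤ. -/
noncomputable def lpNormR (p : ℝ) (f : ℤ → ℝ) : ℝ :=
  (∑' x : ℤ, |f x| ^ p) ^ (1 / p)

/-- Averaging operator along a polynomial `P`. -/
noncomputable def avgR (P : Polynomial ℤ) (N : ℕ) (f : ℤ → ℝ) (x : ℤ) : ℝ :=
  (N : ℝ)⁻¹ * ∑ k ∈ Finset.Icc (1 : ℤ) (N : ℤ), f (x + P.eval k)

lemma supp_pow_subset (q : ℝ) (hq0 : q ≠ 0) (g : ℤ → ℝ) :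
    (Function.support fun x => |g x| ^ q) ⊆ Function.support g := by
  intro x hx
  simp only [Function.mem_support] at hx ⊢
  intro h
  apply hx
  rw [h, abs_zero, Real.zero_rpow hq0]

lemma le_lpNormR (q : ℝ) (hq : 1 ≤ q) (g : ℤ → ℝ) (hg : (Function.support g).Finite)
    (x0 : ℤ) : |g x0| ≤ lpNormR q g := by
  have hq0 : 0 < q := lt_of_lt_of_le one_pos hq
  have hsum : Summable (fun x => |g x| ^ q) :=
    summable_of_finite_support (hg.subset (supp_pow_subset q hq0.ne' g))
  have h1 : |g x0| ^ q ≤ ∑' x, |g x| ^ q :=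
    Summable.le_tsum hsum x0 (fun b _ => Real.rpow_nonneg (abs_nonneg _) q)
  have h2 : (|g x0| ^ q) ^ (1 / q) = |g x0| := by
    rw [← Real.rpow_mul (abs_nonneg _), mul_one_div_cancel hq0.ne', Real.rpow_one]
  calc |g x0| = (|g x0| ^ q) ^ (1 / q) := h2.symm
    _ ≤ (∑' x, |g x| ^ q) ^ (1 / q) :=
        Real.rpow_le_rpow (Real.rpow_nonneg (abs_nonneg _) _) h1 (by positivity)

lemma avg_supp_finite (P : Polynomial ℤ) (N : ℕ) (f : ℤ → ℝ)
    (hf : (Function.support f).Finite) :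
    (Function.support (avgR P N f)).Finite := by
  have hsub : Function.support (avgR P N f) ⊆
      ⋃ k ∈ (Finset.Icc (1 : ℤ) (N : ℤ) : Set ℤ),
        (fun y => y - P.eval k) '' Function.support f := by
    intro x hx
    simp only [Function.mem_support, avgR] at hx
    have hs : ∑ k ∈ Finset.Icc (1 : ℤ) (N : ℤ), f (x + P.eval k) ≠ 0 := by
      intro h; apply hx; rw [h, mul_zero]
    obtain ⟨k, hk, hfk⟩ := Finset.exists_ne_zero_of_sum_ne_zero hs
    refine Set.mem_biUnion hk ⟨x + P.eval k, hfk, by ring⟩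
  exact Set.Finite.subset
    (Set.Finite.biUnion (Finset.finite_toSet _) (fun k _ => hf.image _)) hsub

lemma lpNormR_indicator (p : ℝ) (hp : 1 ≤ p) (S : Finset ℤ) :
    lpNormR p (Set.indicator (↑S) 1) = (S.card : ℝ) ^ (1 / p) := by
  have hp0 : p ≠ 0 := (lt_of_lt_of_le one_pos hp).ne'
  have hval : ∀ x : ℤ, |Set.indicator (↑S : Set ℤ) 1 x| ^ p
      = if x ∈ S then (1 : ℝ) else 0 := by
    intro x
    by_cases hx : x ∈ S
    · simp [Set.indicator_of_mem, hx, Real.one_rpow]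
    · simp [Set.indicator_of_notMem, hx, Real.zero_rpow hp0]
  have htsum : (∑' x : ℤ, |Set.indicator (↑S : Set ℤ) 1 x| ^ p) = (S.card : ℝ) := by
    rw [tsum_eq_sum (s := S) (fun x hx => by rw [hval x, if_neg hx])]
    rw [Finset.sum_congr rfl (fun x hx => by rw [hval x, if_pos hx])]
    simp
  rw [lpNormR, htsum]

theorem stmt_4 (d : ℕ) (hd : 1 ≤ d) (P : Polynomial ℤ) (hdeg : P.natDegree = d)
    (hlead : 0 < P.leadingCoeff) (p q : ℝ) (hp : 1 ≤ p) (hq : 1 ≤ q) :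
    -- lower bound with f = indicator of {P(1), …, P(N)}
    (∀ N : ℕ, 1 ≤ N →
      (N : ℝ) ^ (-(1 / p)) *
          lpNormR p (Set.indicator {y : ℤ | ∃ k ∈ Finset.Icc (1 : ℤ) (N : ℤ), P.eval k = y} 1) ≤
        lpNormR q (avgR P N
          (Set.indicator {y : ℤ | ∃ k ∈ Finset.Icc (1 : ℤ) (N : ℤ), P.eval k = y} 1))) ∧
    -- consequence: necessity of d/q ≥ (d-1)/p for the improving inequality
    ((∃ C : ℝ, ∀ N : ℕ, 1 ≤ N → ∀ f : ℤ → ℝ, (Function.support f).Finite →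
        lpNormR q (avgR P N f) ≤ C * (N : ℝ) ^ (-((d : ℝ) * (1 / p - 1 / q))) * lpNormR p f) →
      ((d : ℝ) - 1) / p ≤ (d : ℝ) / q) := by
  have hp0 : (0 : ℝ) < p := lt_of_lt_of_le one_pos hp
  have hq0 : (0 : ℝ) < q := lt_of_lt_of_le one_pos hq
  -- set identification
  have hsetEq : ∀ N : ℕ,
      {y : ℤ | ∃ k ∈ Finset.Icc (1 : ℤ) (N : ℤ), P.eval k = y}
        = ↑((Finset.Icc (1 : ℤ) (N : ℤ)).image P.eval) := by
    intro N
    ext y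
    simp [eq_comm]
  -- main lower bound, for each N
  have main : ∀ N : ℕ, 1 ≤ N →
      (N : ℝ) ^ (-(1 / p)) *
          lpNormR p (Set.indicator {y : ℤ | ∃ k ∈ Finset.Icc (1 : ℤ) (N : ℤ), P.eval k = y} 1) ≤
        lpNormR q (avgR P N
          (Set.indicator {y : ℤ | ∃ k ∈ Finset.Icc (1 : ℤ) (N : ℤ), P.eval k = y} 1)) := by
    intro N hN
    set S : Finset ℤ := (Finset.Icc (1 : ℤ) (N : ℤ)).image P.eval with hS
    have hNpos : (0 : ℝ) < (N : ℝ) := by exact_mod_cast hN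
    have hcardIcc : (Finset.Icc (1 : ℤ) (N : ℤ)).card = N := by
      rw [Int.card_Icc]
      simp
    have hcard : S.card ≤ N := le_trans (Finset.card_image_le) (le_of_eq hcardIcc)
    rw [hsetEq N]
    set f : ℤ → ℝ := Set.indicator (↑S) 1 with hf
    -- left side ≤ 1
    have hleft : (N : ℝ) ^ (-(1 / p)) * lpNormR p f ≤ 1 := by
      rw [hf, lpNormR_indicator p hp S]
      have h1 : ((S.card : ℝ)) ^ (1 / p) ≤ (N : ℝ) ^ (1 / p) :=
        Real.rpow_le_rpow (by positivity) (by exact_mod_cast hcard) (by positivity)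
      calc (N : ℝ) ^ (-(1 / p)) * (S.card : ℝ) ^ (1 / p)
          ≤ (N : ℝ) ^ (-(1 / p)) * (N : ℝ) ^ (1 / p) := by
            apply mul_le_mul_of_nonneg_left h1 (Real.rpow_nonneg (le_of_lt hNpos) _)
        _ = (N : ℝ) ^ (-(1 / p) + 1 / p) := (Real.rpow_add hNpos _ _).symm
        _ = 1 := by rw [neg_add_cancel, Real.rpow_zero]
    -- avgR f 0 = 1
    have havg0 : avgR P N f 0 = 1 := by
      have hterm : ∀ k ∈ Finset.Icc (1 : ℤ) (N : ℤ), f (0 + P.eval k) = 1 := by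
        intro k hk
        rw [zero_add, hf]
        have : P.eval k ∈ S := Finset.mem_image_of_mem _ hk
        simp [Set.indicator_of_mem, this]
      rw [avgR, Finset.sum_congr rfl hterm, Finset.sum_const, hcardIcc]
      simp
      field_simp
    -- support finiteness
    have hsuppf : (Function.support f).Finite := by
      apply Set.Finite.subset S.finite_toSet
      intro x hx
      rw [Function.mem_support, hf] at hx
      by_contra hxS
      exact hx (Set.indicator_of_notMem hxS 1)
    have hsuppA := avg_supp_finite P N f hsuppf
    have hright : (1 : ℝ) ≤ lpNormR q (avgR P N f) := by
      have := le_lpNormR q hq (avgR P N f) hsuppA 0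
      rwa [havg0, abs_one] at this
    exact le_trans hleft hright
  refine ⟨main, ?_⟩
  rintro ⟨C, hC⟩
  by_contra hcon
  push_neg at hcon
  set ε : ℝ := ((d : ℝ) - 1) / p - (d : ℝ) / q with hε
  have hεpos : 0 < ε := sub_pos.mpr hcon
  -- for each N ≥ 1 : N ^ ε ≤ C
  have key : ∀ N : ℕ, 1 ≤ N → (N : ℝ) ^ ε ≤ C := by
    intro N hN
    have hNpos : (0 : ℝ) < (N : ℝ) := by exact_mod_cast hN
    set S : Finset ℤ := (Finset.Icc (1 : ℤ) (N : ℤ)).image P.eval with hS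
    set f : ℤ → ℝ := Set.indicator (↑S) 1 with hf
    have hsuppf : (Function.support f).Finite := by
      apply Set.Finite.subset S.finite_toSet
      intro x hx
      rw [Function.mem_support, hf] at hx
      by_contra hxS
      exact hx (Set.indicator_of_notMem hxS 1)
    have hmain := main N hN
    rw [hsetEq N, ← hS, ← hf] at hmain
    have hCN := hC N hN f hsuppf
    have hnorm : lpNormR p f = (S.card : ℝ) ^ (1 / p) := lpNormR_indicator p hp S
    have hSne : 0 < S.card := by
      rw [hS]
      apply Finset.card_pos.mpr
      refine ⟨P.eval 1, Finset.mem_image_of_mem _ ?_⟩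
      rw [Finset.mem_Icc]
      exact ⟨le_refl _, by exact_mod_cast hN⟩
    have hnormpos : 0 < lpNormR p f := by
      rw [hnorm]
      apply Real.rpow_pos_of_pos
      exact_mod_cast hSne
    have hchain : (N : ℝ) ^ (-(1 / p)) * lpNormR p f
        ≤ C * (N : ℝ) ^ (-((d : ℝ) * (1 / p - 1 / q))) * lpNormR p f :=
      le_trans hmain hCN
    have h2 : (N : ℝ) ^ (-(1 / p)) ≤ C * (N : ℝ) ^ (-((d : ℝ) * (1 / p - 1 / q))) :=
      le_of_mul_le_mul_right hchain hnormpos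
    have h3 : (N : ℝ) ^ (-(1 / p)) * (N : ℝ) ^ ((d : ℝ) * (1 / p - 1 / q))
        ≤ C * (N : ℝ) ^ (-((d : ℝ) * (1 / p - 1 / q)))
          * (N : ℝ) ^ ((d : ℝ) * (1 / p - 1 / q)) :=
      mul_le_mul_of_nonneg_right h2 (Real.rpow_nonneg (le_of_lt hNpos) _)
    have h4 : C * (N : ℝ) ^ (-((d : ℝ) * (1 / p - 1 / q)))
          * (N : ℝ) ^ ((d : ℝ) * (1 / p - 1 / q)) = C := by
      rw [mul_assoc, ← Real.rpow_add hNpos, neg_add_cancel, Real.rpow_zero, mul_one]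
    have h5 : (N : ℝ) ^ (-(1 / p)) * (N : ℝ) ^ ((d : ℝ) * (1 / p - 1 / q))
        = (N : ℝ) ^ ε := by
      rw [← Real.rpow_add hNpos]
      congr 1
      rw [hε]
      field_simp
      ring
    rw [h4, h5] at h3
    exact h3
  -- contradiction: N ^ ε → ∞
  have htend : Filter.Tendsto (fun N : ℕ => (N : ℝ) ^ ε) Filter.atTop Filter.atTop :=
    (tendsto_rpow_atTop hεpos).comp tendsto_natCast_atTop_atTop
  obtain ⟨N, hN⟩ := (htend.eventually_gt_atTop C).and (Filter.eventually_ge_atTop 1)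
    |>.exists
  exact absurd (key N hN.2) (not_le.mpr hN.1)
end

section
/- For the averaging operator A_N along a polynomial P of degree d with positive leading coefficient and f = 𝟙_{{0}}, one has ‖A_N f‖_{ℓ^q} ≥ N^{1/q - 1}. Consequently, if ‖A_N f‖_{ℓ^q} ≤ C N^{-d(1/p - 1/q)} ‖f‖_{ℓ^p} holds for all N, then (d-1)/q ≥ d/p - 1. -/
open Finset

lemma lp_indicator_one (p : ℝ) (hp : 0 < p) :
    lpNormR p (Set.indicator {(0 : ℤ)} 1) = 1 := by
  unfold lpNormR
  have h : ∑' x : ℤ, |Set.indicator {(0 : ℤ)} (1 : ℤ → ℝ) x| ^ p = 1 := by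
    rw [tsum_eq_single (0 : ℤ)]
    · simp
    · intro b hb
      simp [Set.indicator_apply, hb, Real.zero_rpow hp.ne']
  rw [h, Real.one_rpow]

lemma lower_bound (P : Polynomial ℤ) (q : ℝ) (hq : 1 ≤ q) (N : ℕ) (hN : 1 ≤ N) :
    (N : ℝ) ^ (1 / q - 1) ≤ lpNormR q (avgR P N (Set.indicator {(0 : ℤ)} 1)) := by
  have hq0 : (0 : ℝ) < q := lt_of_lt_of_le one_pos hq
  have hNpos : (0 : ℝ) < N := by exact_mod_cast hN
  set c : ℤ → ℕ := fun x => ((Icc (1 : ℤ) (N : ℤ)).filter (fun k => x + P.eval k = 0)).card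
    with hc
  have havg : ∀ x : ℤ, avgR P N (Set.indicator {(0 : ℤ)} 1) x = (c x : ℝ) / N := by
    intro x
    unfold avgR
    have : ∑ k ∈ Icc (1 : ℤ) (N : ℤ), Set.indicator {(0 : ℤ)} (1 : ℤ → ℝ) (x + P.eval k)
        = (c x : ℝ) := by
      rw [hc]
      simp only [Set.indicator_apply, Set.mem_singleton_iff, Pi.one_apply]
      rw [Finset.sum_boole]
    rw [this, div_eq_inv_mul]
  set T : Finset ℤ := (Icc (1 : ℤ) (N : ℤ)).image (fun k => -P.eval k) with hT
  have hzero : ∀ x ∉ T, c x = 0 := by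
    intro x hx
    rw [hc]
    simp only [Finset.card_eq_zero, Finset.filter_eq_empty_iff]
    intro k hk hxk
    exact hx (Finset.mem_image.mpr ⟨k, hk, by linarith⟩)
  have hpos : ∀ x ∈ T, 1 ≤ c x := by
    intro x hx
    obtain ⟨k, hk, hkx⟩ := Finset.mem_image.mp hx
    have : k ∈ (Icc (1 : ℤ) (N : ℤ)).filter (fun k => x + P.eval k = 0) :=
      Finset.mem_filter.mpr ⟨hk, by linarith⟩
    exact Finset.card_pos.mpr ⟨k, this⟩
  have hsum : ∑ x ∈ T, c x = N := by
    have := Finset.card_eq_sum_card_image (fun k => -P.eval k) (Icc (1 : ℤ) (N : ℤ))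
    have hcard : (Icc (1 : ℤ) (N : ℤ)).card = N := by
      rw [Int.card_Icc]; simp
    rw [hcard] at this
    rw [this, hT]
    refine Finset.sum_congr rfl (fun x _ => ?_)
    show ((Icc (1 : ℤ) (N : ℤ)).filter (fun k => x + P.eval k = 0)).card = _
    congr 1
    apply Finset.filter_congr
    intro k _
    constructor <;> intro h <;> linarith
  -- compute the tsum
  have hts : ∑' x : ℤ, |avgR P N (Set.indicator {(0 : ℤ)} 1) x| ^ q
      = ∑ x ∈ T, ((c x : ℝ) / N) ^ q := by
    rw [tsum_eq_sum (s := T)]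
    · refine Finset.sum_congr rfl (fun x _ => ?_)
      rw [havg x, abs_of_nonneg (by positivity)]
    · intro b hb
      rw [havg b, hzero b hb]
      simp [Real.zero_rpow hq0.ne']
  have key : (N : ℝ) ^ ((1 : ℝ) - q) ≤ ∑ x ∈ T, ((c x : ℝ) / N) ^ q := by
    have step1 : ∑ x ∈ T, (c x : ℝ) / (N : ℝ) ^ q ≤ ∑ x ∈ T, ((c x : ℝ) / N) ^ q := by
      refine Finset.sum_le_sum (fun x hx => ?_)
      rw [Real.div_rpow (by positivity) hNpos.le]
      apply div_le_div_of_nonneg_right ?_ (by positivity)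
      · calc (c x : ℝ) = (c x : ℝ) ^ (1 : ℝ) := (Real.rpow_one _).symm
          _ ≤ (c x : ℝ) ^ q := by
              apply Real.rpow_le_rpow_of_exponent_le _ hq
              exact_mod_cast hpos x hx
    have step2 : ∑ x ∈ T, (c x : ℝ) / (N : ℝ) ^ q = (N : ℝ) ^ ((1 : ℝ) - q) := by
      rw [← Finset.sum_div]
      have : ∑ x ∈ T, (c x : ℝ) = (N : ℝ) := by
        rw [← Nat.cast_sum, hsum]
      rw [this, Real.rpow_sub hNpos, Real.rpow_one]
    linarith
  unfold lpNormR
  rw [hts]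
  calc (N : ℝ) ^ (1 / q - 1) = ((N : ℝ) ^ ((1 : ℝ) - q)) ^ (1 / q) := by
        rw [← Real.rpow_mul hNpos.le]
        congr 1
        field_simp
      _ ≤ (∑ x ∈ T, ((c x : ℝ) / N) ^ q) ^ (1 / q) := by
        apply Real.rpow_le_rpow (by positivity) key (by positivity)

theorem stmt_5 (d : ℕ) (hd : 1 ≤ d) (P : Polynomial ℤ) (hdeg : P.natDegree = d)
    (hlead : 0 < P.leadingCoeff) (p q : ℝ) (hp : 1 ≤ p) (hq : 1 ≤ q) :
    -- lower bound with f = indicator of {0}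
    (∀ N : ℕ, 1 ≤ N →
      (N : ℝ) ^ (1 / q - 1) ≤ lpNormR q (avgR P N (Set.indicator {(0 : ℤ)} 1))) ∧
    -- consequence: necessity of (d-1)/q ≥ d/p - 1 for the improving inequality
    ((∃ C : ℝ, ∀ N : ℕ, 1 ≤ N → ∀ f : ℤ → ℝ, (Function.support f).Finite →
        lpNormR q (avgR P N f) ≤ C * (N : ℝ) ^ (-((d : ℝ) * (1 / p - 1 / q))) * lpNormR p f) →
      (d : ℝ) / p - 1 ≤ ((d : ℝ) - 1) / q) := by
  have hp0 : (0 : ℝ) < p := lt_of_lt_of_le one_pos hp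
  have hq0 : (0 : ℝ) < q := lt_of_lt_of_le one_pos hq
  constructor
  · exact fun N hN => lower_bound P q hq N hN
  · rintro ⟨C, hC⟩
    by_contra h
    push_neg at h
    set ε : ℝ := 1 / q - 1 + (d : ℝ) * (1 / p - 1 / q) with hε
    have e1 : (d : ℝ) * (1 / p - 1 / q) = (d : ℝ) / p - (d : ℝ) / q := by ring
    have e2 : ((d : ℝ) - 1) / q = (d : ℝ) / q - 1 / q := by ring
    have hεpos : 0 < ε := by
      rw [hε, e1]; rw [e2] at h; linarith
    have hsupp : (Function.support (Set.indicator {(0 : ℤ)} (1 : ℤ → ℝ))).Finite := by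
      apply Set.Finite.subset (Set.finite_singleton (0 : ℤ))
      exact Set.support_indicator_subset
    have hbound : ∀ N : ℕ, 1 ≤ N → (N : ℝ) ^ ε ≤ C := by
      intro N hN
      have hNpos : (0 : ℝ) < N := by exact_mod_cast hN
      have h1 := lower_bound P q hq N hN
      have h2 := hC N hN _ hsupp
      rw [lp_indicator_one p hp0, mul_one] at h2
      have h3 : (N : ℝ) ^ (1 / q - 1) ≤ C * (N : ℝ) ^ (-((d : ℝ) * (1 / p - 1 / q))) :=
        le_trans h1 h2
      have h4 := mul_le_mul_of_nonneg_right h3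
        (Real.rpow_nonneg hNpos.le ((d : ℝ) * (1 / p - 1 / q)))
      calc (N : ℝ) ^ ε = (N : ℝ) ^ (1 / q - 1) * (N : ℝ) ^ ((d : ℝ) * (1 / p - 1 / q)) := by
            rw [← Real.rpow_add hNpos]
          _ ≤ C * (N : ℝ) ^ (-((d : ℝ) * (1 / p - 1 / q)))
                * (N : ℝ) ^ ((d : ℝ) * (1 / p - 1 / q)) := h4
          _ = C := by
            rw [mul_assoc, ← Real.rpow_add hNpos]
            simp
    have htend : Filter.Tendsto (fun N : ℕ => (N : ℝ) ^ ε) Filter.atTop Filter.atTop :=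
      (tendsto_rpow_atTop hεpos).comp tendsto_natCast_atTop_atTop
    obtain ⟨N, hN1, hN2⟩ := ((htend.eventually_gt_atTop C).and
      (Filter.eventually_atTop.mpr ⟨1, fun n hn => hn⟩)).exists
    exact absurd (hbound N hN2) (not_le.mpr hN1)
end

section
/- For the d-dimensional averaging operator à _N and f = 𝟙_{{(0,…,0)}}, one has Ã_N f(-m, -m², …, -m^d) = 1/N for each 1 ≤ m ≤ N, hence ‖Ã_N f‖_{ℓ^q(ℤ^d)} ≥ N^{1/q - 1}. Consequently, if ‖Ã_N f‖_{ℓ^q(ℤ^d)} ≤ C N^{-d(d+1)/2 · (1/p - 1/q)} ‖f‖_{ℓ^p(ℤ^d)} for all N, then (d²+d-2)/q ≥ (d²+d)/p - 2. -/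
open Finset

/-- ℓ^p norm (finite real exponent) of a real-valued function on ℤ^d. -/
noncomputable def lpD (d : ℕ) (p : ℝ) (f : (Fin d → ℤ) → ℝ) : ℝ :=
  (∑' x : Fin d → ℤ, |f x| ^ p) ^ (1 / p)

/-- d-dimensional averaging operator along the moment curve `(k, k², …, k^d)`. -/
noncomputable def avgD (d N : ℕ) (f : (Fin d → ℤ) → ℝ) (x : Fin d → ℤ) : ℝ :=
  (N : ℝ)⁻¹ * ∑ k ∈ Finset.Icc 1 N, f (fun i => x i + (k : ℤ) ^ ((i : ℕ) + 1))

lemma ind_apply (d : ℕ) (y : Fin d → ℤ) :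
    (Set.indicator {fun _ => (0:ℤ)} (1 : (Fin d → ℤ) → ℝ)) y
      = if y = (fun _ => 0) then 1 else 0 := by
  simp [Set.indicator_apply, Set.mem_singleton_iff]

lemma valA (d N : ℕ) (hd : 1 ≤ d) {m : ℕ} (hm : m ∈ Finset.Icc 1 N) :
    avgD d N (Set.indicator {fun _ => (0 : ℤ)} 1)
        (fun i => -((m : ℤ) ^ ((i : ℕ) + 1))) = (N : ℝ)⁻¹ := by
  unfold avgD
  rw [Finset.sum_eq_single m]
  · have h1 : (fun i : Fin d => -((m:ℤ)^((i:ℕ)+1)) + (m:ℤ)^((i:ℕ)+1))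
        = (fun _ => (0:ℤ)) := by funext i; ring
    rw [ind_apply, if_pos h1, mul_one]
  · intro k hk hkm
    rw [ind_apply, if_neg]
    intro h
    apply hkm
    have h0 := congrFun h ⟨0, hd⟩
    simp at h0
    omega
  · intro h; exact absurd hm h

lemma suppA (d N : ℕ) (x : Fin d → ℤ)
    (hx : ∀ k ∈ Finset.Icc 1 N, x ≠ fun i : Fin d => -((k:ℤ)^((i:ℕ)+1))) :
    avgD d N (Set.indicator {fun _ => (0:ℤ)} 1) x = 0 := by
  unfold avgD
  rw [Finset.sum_eq_zero, mul_zero]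
  intro k hk
  rw [ind_apply, if_neg]
  intro h
  apply hx k hk
  funext i
  have h0 := congrFun h i
  omega

lemma exp_le {a b C : ℝ} (h : ∀ N : ℕ, 1 ≤ N → (N:ℝ)^a ≤ C * (N:ℝ)^b) : a ≤ b := by
  by_contra hab
  push_neg at hab
  have ht : Filter.Tendsto (fun N : ℕ => (N:ℝ)^(a-b)) Filter.atTop Filter.atTop :=
    (tendsto_rpow_atTop (by linarith)).comp tendsto_natCast_atTop_atTop
  obtain ⟨N, hN2, hN1⟩ :=
    ((ht.eventually_gt_atTop C).and (Filter.eventually_ge_atTop 1)).exists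
  have hNpos : (0:ℝ) < N := by exact_mod_cast Nat.lt_of_lt_of_le Nat.zero_lt_one hN1
  have hb : (0:ℝ) < (N:ℝ)^b := Real.rpow_pos_of_pos hNpos b
  have := h N hN1
  have hlt : C * (N:ℝ)^b < (N:ℝ)^a := by
    calc C * (N:ℝ)^b < (N:ℝ)^(a-b) * (N:ℝ)^b := by
          exact mul_lt_mul_of_pos_right hN2 hb
      _ = (N:ℝ)^a := by rw [← Real.rpow_add hNpos]; ring_nf
  linarith

theorem stmt_7 (d : ℕ) (hd : 1 ≤ d) (p q : ℝ) (hp : 1 ≤ p) (hq : 1 ≤ q) :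
    (∀ N : ℕ, 1 ≤ N →
      (∀ m : ℕ, m ∈ Finset.Icc 1 N →
        avgD d N (Set.indicator {fun _ => (0 : ℤ)} 1)
            (fun i => -((m : ℤ) ^ ((i : ℕ) + 1))) = (N : ℝ)⁻¹) ∧
      (N : ℝ) ^ (1 / q - 1) ≤ lpD d q (avgD d N (Set.indicator {fun _ => (0 : ℤ)} 1))) ∧
    ((∃ C : ℝ, ∀ N : ℕ, 1 ≤ N → ∀ f : (Fin d → ℤ) → ℝ, (Function.support f).Finite →
        lpD d q (avgD d N f) ≤
          C * (N : ℝ) ^ (-((d : ℝ) * ((d : ℝ) + 1) / 2 * (1 / p - 1 / q))) * lpD d p f) →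
      ((d : ℝ) ^ 2 + (d : ℝ)) / p - 2 ≤ ((d : ℝ) ^ 2 + (d : ℝ) - 2) / q) := by
  have hq0 : (0:ℝ) < q := lt_of_lt_of_le one_pos hq
  have hp0 : (0:ℝ) < p := lt_of_lt_of_le one_pos hp
  -- main lower bound for each N
  have key : ∀ N : ℕ, 1 ≤ N →
      (N : ℝ) ^ (1 / q - 1) ≤ lpD d q (avgD d N (Set.indicator {fun _ => (0 : ℤ)} 1)) := by
    intro N hN
    set g := avgD d N (Set.indicator {fun _ => (0 : ℤ)} (1 : (Fin d → ℤ) → ℝ)) with hg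
    have hNpos : (0:ℝ) < N := by exact_mod_cast Nat.lt_of_lt_of_le Nat.zero_lt_one hN
    set xpt : ℕ → (Fin d → ℤ) := fun m i => -((m:ℤ)^((i:ℕ)+1)) with hxpt
    have hinj : Set.InjOn xpt (Finset.Icc 1 N) := by
      intro a _ b _ hab
      have h0 := congrFun hab ⟨0, hd⟩
      simp [hxpt] at h0
      omega
    set s : Finset (Fin d → ℤ) := (Finset.Icc 1 N).image xpt with hs
    have hzero : ∀ x : Fin d → ℤ, x ∉ s → |g x| ^ q = 0 := by
      intro x hxs
      have : g x = 0 := by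
        apply suppA d N x
        intro k hk hxk
        exact hxs (Finset.mem_image.2 ⟨k, hk, hxk.symm⟩)
      rw [this, abs_zero, Real.zero_rpow (ne_of_gt hq0)]
    have hsummable : Summable (fun x : Fin d → ℤ => |g x| ^ q) :=
      summable_of_ne_finset_zero hzero
    have hsum : ∑ x ∈ s, |g x| ^ q = (N:ℝ) * ((N:ℝ)⁻¹) ^ q := by
      rw [hs, Finset.sum_image hinj]
      have : ∀ m ∈ Finset.Icc 1 N, |g (xpt m)| ^ q = ((N:ℝ)⁻¹) ^ q := by
        intro m hm
        rw [hg, hxpt]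
        rw [valA d N hd hm, abs_of_nonneg (by positivity)]
      rw [Finset.sum_congr rfl this, Finset.sum_const, Nat.card_Icc]
      simp [nsmul_eq_mul]
    have hle : ∑ x ∈ s, |g x| ^ q ≤ ∑' x : Fin d → ℤ, |g x| ^ q :=
      Summable.sum_le_tsum s (fun x _ => Real.rpow_nonneg (abs_nonneg _) q) hsummable
    have heq : ((N:ℝ) * ((N:ℝ)⁻¹) ^ q) ^ (1/q) = (N:ℝ) ^ (1/q - 1) := by
      have h1 : ((N:ℝ)⁻¹) ^ q = (N:ℝ) ^ (-q) := by
        rw [Real.inv_rpow hNpos.le, ← Real.rpow_neg hNpos.le]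
      have h2 : (N:ℝ) * (N:ℝ) ^ (-q) = (N:ℝ) ^ (1 - q) := by
        rw [Real.rpow_sub hNpos, Real.rpow_one, Real.rpow_neg hNpos.le, div_eq_mul_inv]
      rw [h1, h2, ← Real.rpow_mul hNpos.le]
      congr 1
      field_simp
    calc (N : ℝ) ^ (1 / q - 1) = ((N:ℝ) * ((N:ℝ)⁻¹) ^ q) ^ (1/q) := heq.symm
      _ ≤ (∑' x : Fin d → ℤ, |g x| ^ q) ^ (1/q) := by
          apply Real.rpow_le_rpow (by positivity) (hsum ▸ hle) (by positivity)
      _ = lpD d q g := rfl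
  refine ⟨fun N hN => ⟨fun m hm => valA d N hd hm, key N hN⟩, ?_⟩
  rintro ⟨C, hC⟩
  -- lpD d p of the indicator equals 1
  set f := Set.indicator {fun _ => (0 : ℤ)} (1 : (Fin d → ℤ) → ℝ) with hf
  have hsupp : (Function.support f).Finite :=
    Set.Finite.subset (Set.finite_singleton (fun _ => (0:ℤ))) Set.support_indicator_subset
  have hlp : lpD d p f = 1 := by
    unfold lpD
    have : ∑' x : Fin d → ℤ, |f x| ^ p = 1 := by
      rw [tsum_eq_single (fun _ => (0:ℤ))]
      · rw [hf, ind_apply, if_pos rfl]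
        simp
      · intro x hx
        rw [hf, ind_apply, if_neg hx, abs_zero, Real.zero_rpow (ne_of_gt hp0)]
    rw [this, Real.one_rpow]
  have hmain : (1:ℝ)/q - 1 ≤ -((d : ℝ) * ((d : ℝ) + 1) / 2 * (1 / p - 1 / q)) := by
    apply exp_le (C := C)
    intro N hN
    calc (N:ℝ) ^ ((1:ℝ)/q - 1) ≤ lpD d q (avgD d N f) := key N hN
      _ ≤ C * (N : ℝ) ^ (-((d : ℝ) * ((d : ℝ) + 1) / 2 * (1 / p - 1 / q))) * lpD d p f :=
          hC N hN f hsupp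
      _ = C * (N : ℝ) ^ (-((d : ℝ) * ((d : ℝ) + 1) / 2 * (1 / p - 1 / q))) := by
          rw [hlp, mul_one]
  rw [show ((d : ℝ) ^ 2 + (d : ℝ)) / p = ((d : ℝ) ^ 2 + (d : ℝ)) * (1/p) by ring,
      show ((d : ℝ) ^ 2 + (d : ℝ) - 2) / q = ((d : ℝ) ^ 2 + (d : ℝ) - 2) * (1/q) by ring]
  nlinarith [hmain]
end

section
/- Suppose d ≥ 3 and the d-dimensional improving estimate ‖Ã_N F‖_{ℓ^q(ℤ^d)} ≤ C N^{-d(d+1)/2·(1/p - 1/q)} ‖F‖_{ℓ^p(ℤ^d)} holds for all N and finitely supported F. Then for the one-dimensional fractional integral Ĩ_{d,λ} with 0 < 1 - λ < d(d+1)/2 · (1/p - 1/q), one has ‖Ĩ_{d,λ} F‖_{ℓ^q(ℤ^d)} ≤ C' ‖F‖_{ℓ^p(ℤ^d)} with C' depending only on C, λ, d, p, q. -/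
open Finset

/-- d-dimensional fractional integral along the moment curve. -/
noncomputable def fracD (d : ℕ) (lam : ℝ) (f : (Fin d → ℤ) → ℝ) (x : Fin d → ℤ) : ℝ :=
  ∑' k : ℕ, ((k : ℝ) + 1) ^ (-lam) * f (fun i => x i + ((k : ℤ) + 1) ^ ((i : ℕ) + 1))

lemma memlp_of_finite {ι : Type*} {f : ι → ℝ} (hf : (Function.support f).Finite) (Q : ENNReal) :
    Memℓp f Q :=
  (memℓp_zero hf).of_exponent_ge (zero_le : (0:ENNReal) ≤ Q)

lemma summable_abs_rpow {ι : Type*} {f : ι → ℝ} (hf : (Function.support f).Finite) {q : ℝ}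
    (hq : 0 < q) : Summable fun x => |f x| ^ q := by
  apply summable_of_ne_finset_zero (s := hf.toFinset)
  intro x hx
  have : f x = 0 := by
    by_contra h
    exact hx (hf.mem_toFinset.2 h)
  rw [this, abs_zero, Real.zero_rpow hq.ne']

lemma lpD_nonneg {d : ℕ} {q : ℝ} (f : (Fin d → ℤ) → ℝ) : 0 ≤ lpD d q f :=
  Real.rpow_nonneg (tsum_nonneg fun _ => Real.rpow_nonneg (abs_nonneg _) _) _

lemma lpD_mono {d : ℕ} {q : ℝ} (hq : 0 < q) {f g : (Fin d → ℤ) → ℝ}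
    (hg : (Function.support g).Finite) (h0 : ∀ x, 0 ≤ f x) (hfg : ∀ x, f x ≤ g x) :
    lpD d q f ≤ lpD d q g := by
  have hf : (Function.support f).Finite := by
    apply hg.subset
    intro x hx
    simp only [Function.mem_support] at hx ⊢
    intro hgx
    exact hx (le_antisymm (hgx ▸ hfg x) (h0 x))
  have hterm : ∀ x, |f x| ^ q ≤ |g x| ^ q := fun x => by
    apply Real.rpow_le_rpow (abs_nonneg _) _ hq.le
    rw [abs_of_nonneg (h0 x), abs_of_nonneg ((h0 x).trans (hfg x))]
    exact hfg x
  apply Real.rpow_le_rpow (tsum_nonneg fun _ => Real.rpow_nonneg (abs_nonneg _) _)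
    (Summable.tsum_le_tsum hterm (summable_abs_rpow hf hq) (summable_abs_rpow hg hq))
    (by positivity)

lemma lpD_smul {d : ℕ} {q : ℝ} (hq : 0 < q) {c : ℝ} (hc : 0 ≤ c) (g : (Fin d → ℤ) → ℝ) :
    lpD d q (fun x => c * g x) = c * lpD d q g := by
  unfold lpD
  have h1 : ∀ x, |c * g x| ^ q = c ^ q * |g x| ^ q := fun x => by
    rw [abs_mul, abs_of_nonneg hc, Real.mul_rpow hc (abs_nonneg _)]
  simp_rw [h1]
  rw [tsum_mul_left, Real.mul_rpow (Real.rpow_nonneg hc _)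
    (tsum_nonneg fun _ => Real.rpow_nonneg (abs_nonneg _) _)]
  congr 1
  rw [← Real.rpow_mul hc, mul_one_div_cancel hq.ne', Real.rpow_one]

lemma lpD_eq_norm {d : ℕ} {q : ℝ} (hq : 0 < q) [Fact (1 ≤ ENNReal.ofReal q)]
    (G : lp (fun _ : Fin d → ℤ => ℝ) (ENNReal.ofReal q)) : lpD d q ⇑G = ‖G‖ := by
  rw [lp.norm_eq_tsum_rpow (by rw [ENNReal.toReal_ofReal hq.le]; exact hq)]
  unfold lpD
  simp_rw [ENNReal.toReal_ofReal hq.le, Real.norm_eq_abs]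

lemma supp_translates {d : ℕ} {F : (Fin d → ℤ) → ℝ} (hF : (Function.support F).Finite)
    {ι : Type*} (s : Finset ι) (c : ι → ℝ) (a : ι → Fin d → ℤ) :
    (Function.support fun x : Fin d → ℤ => ∑ k ∈ s, c k * F (fun i => x i + a k i)).Finite := by
  apply Set.Finite.subset (s := ⋃ k ∈ (s : Set ι),
    (fun x : Fin d → ℤ => (fun i => x i + a k i)) ⁻¹' (Function.support F))
  · apply Set.Finite.biUnion s.finite_toSet
    intro k _
    apply Set.Finite.preimage _ hF
    intro x _ y _ hxy
    funext i
    have := congrFun hxy i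
    simpa using this
  · intro x hx
    simp only [Function.mem_support] at hx
    obtain ⟨k, hk, hne⟩ := Finset.exists_ne_zero_of_sum_ne_zero hx
    simp only [Set.mem_iUnion]
    exact ⟨k, hk, fun h => hne (by simp [Function.mem_support, not_not] at h; simp [h])⟩

lemma dyadic_sum {M : Type*} [AddCommMonoid M] (f : ℕ → M) (n : ℕ) :
    ∑ j ∈ Finset.range n, ∑ k ∈ Finset.Ico (2 ^ j - 1) (2 ^ (j + 1) - 1), f k =
      ∑ k ∈ Finset.range (2 ^ n - 1), f k := by
  induction n with
  | zero => simp
  | succ n ih =>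
    rw [Finset.sum_range_succ, ih, Finset.range_eq_Ico, Finset.range_eq_Ico]
    apply Finset.sum_Ico_consecutive
    · omega
    · have : 2 ^ n ≤ 2 ^ (n + 1) := Nat.pow_le_pow_right (by norm_num) (by omega)
      omega

noncomputable def evalCLM {ι : Type*} (Q : ENNReal) [Fact (1 ≤ Q)] (x : ι) :
    lp (fun _ : ι => ℝ) Q →L[ℝ] ℝ :=
  LinearMap.mkContinuous
    { toFun := fun f => f x
      map_add' := fun f g => by have := congrFun (lp.coeFn_add f g) x; simpa using this
      map_smul' := fun c f => by have := congrFun (lp.coeFn_smul c f) x; simpa using this }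
    1
    (fun f => by
      show ‖(f : ι → ℝ) x‖ ≤ 1 * ‖f‖
      simpa using lp.norm_apply_le_norm
        (by have : (1:ENNReal) ≤ Q := Fact.out; positivity) f x)

lemma pow_identity (j : ℕ) (lam a : ℝ) :
    (((2:ℝ)^j)^(-lam) * (2*(2:ℝ)^j)) * ((2:ℝ)^j)^(-a) = 2 * ((2:ℝ)^(1-lam-a))^j := by
  have h2 : (0:ℝ) < 2 := two_pos
  rw [← Real.rpow_natCast (2:ℝ) j, ← Real.rpow_natCast ((2:ℝ)^(1-lam-a)) j,
    ← Real.rpow_mul h2.le, ← Real.rpow_mul h2.le, ← Real.rpow_mul h2.le]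
  have hadd : ∀ a b : ℝ, (2:ℝ)^a * (2:ℝ)^b = (2:ℝ)^(a+b) := fun a b => (Real.rpow_add h2 a b).symm
  calc (2:ℝ)^((j:ℝ)*(-lam)) * (2 * (2:ℝ)^(j:ℝ)) * (2:ℝ)^((j:ℝ)*(-a))
      = 2 * ((2:ℝ)^((j:ℝ)*(-lam)) * (2:ℝ)^(j:ℝ) * (2:ℝ)^((j:ℝ)*(-a))) := by ring
    _ = 2 * (2:ℝ)^((j:ℝ)*(-lam) + (j:ℝ) + (j:ℝ)*(-a)) := by rw [hadd, hadd]
    _ = 2 * (2:ℝ)^((1-lam-a)*(j:ℝ)) := by congr 1; ring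

lemma sum_shift (f : ℕ → ℝ) (a b : ℕ) :
    ∑ k ∈ Finset.Ico a b, f (k+1) = ∑ m ∈ Finset.Ico (a+1) (b+1), f m := by
  rw [← Finset.map_add_right_Ico, Finset.sum_map]
  simp [addRightEmbedding_apply]
theorem stmt_13 (d : ℕ) (hd : 3 ≤ d) (p q : ℝ) (hp : 1 ≤ p) (hpq : p ≤ q) (C : ℝ)
    (hA : ∀ N : ℕ, 1 ≤ N → ∀ F : (Fin d → ℤ) → ℝ, (Function.support F).Finite →
      (∀ x, 0 ≤ F x) →
      lpD d q (avgD d N F) ≤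
        C * (N : ℝ) ^ (-((d : ℝ) * ((d : ℝ) + 1) / 2 * (1 / p - 1 / q))) * lpD d p F)
    (lam : ℝ) (hlam : 0 < lam) (hlam1 : lam < 1)
    (h1 : 0 < 1 - lam) (h2 : 1 - lam < (d : ℝ) * ((d : ℝ) + 1) / 2 * (1 / p - 1 / q)) :
    ∃ C' : ℝ, ∀ F : (Fin d → ℤ) → ℝ, (Function.support F).Finite → (∀ x, 0 ≤ F x) →
      lpD d q (fracD d lam F) ≤ C' * lpD d p F := by
  have hq1 : 1 ≤ q := hp.trans hpq
  have hq0 : 0 < q := lt_of_lt_of_le one_pos hq1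
  set al : ℝ := (d : ℝ) * ((d : ℝ) + 1) / 2 * (1 / p - 1 / q) with hal_def
  have hal : 0 < al := h1.trans h2
  set r : ℝ := (2:ℝ) ^ (1 - lam - al) with hr_def
  have hr0 : 0 < r := Real.rpow_pos_of_pos two_pos _
  have hr1 : r < 1 := Real.rpow_lt_one_of_one_lt_of_neg (by norm_num) (by linarith)
  have hsum_r : Summable (fun j : ℕ => r ^ j) := summable_geometric_of_lt_one hr0.le hr1
  set Q : ENNReal := ENNReal.ofReal q with hQ_def
  haveI : Fact (1 ≤ Q) := ⟨ENNReal.one_le_ofReal.2 hq1⟩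
  refine ⟨2 * |C| * ∑' j : ℕ, r ^ j, ?_⟩
  intro F hFfin hFpos
  set A := lpD d p F with hA_def
  have hA0 : 0 ≤ A := lpD_nonneg F
  set t : ℕ → (Fin d → ℤ) → ℝ :=
    fun k x => ((k:ℝ)+1)^(-lam) * F (fun i => x i + ((k:ℤ)+1)^((i:ℕ)+1)) with ht_def
  set h : ℕ → (Fin d → ℤ) → ℝ :=
    fun j x => ∑ k ∈ Finset.Ico (2^j - 1 : ℕ) (2^(j+1) - 1 : ℕ), t k x with hh_def
  have ht0 : ∀ k x, 0 ≤ t k x := fun k x =>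
    mul_nonneg (Real.rpow_nonneg (by positivity) _) (hFpos _)
  have hh0 : ∀ j x, 0 ≤ h j x := fun j x => Finset.sum_nonneg fun k _ => ht0 k x
  have hhsupp : ∀ j, (Function.support (h j)).Finite := by
    intro j
    have := supp_translates hFfin (Finset.Ico (2^j-1 : ℕ) (2^(j+1)-1 : ℕ))
      (fun k : ℕ => ((k:ℝ)+1)^(-lam)) (fun (k : ℕ) (i : Fin d) => ((k:ℤ)+1)^((i:ℕ)+1))
    simpa [hh_def, ht_def] using this
  -- key norm bound
  have key : ∀ j : ℕ, lpD d q (h j) ≤ 2 * |C| * A * r ^ j := by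
    intro j
    set N : ℕ := 2^(j+1) - 1 with hN_def
    have h2j : 1 ≤ 2^j := Nat.one_le_two_pow
    have h2j1 : (2:ℕ)^(j+1) = 2 * 2^j := by rw [pow_succ]; ring
    have hN1 : 1 ≤ N := by rw [hN_def]; omega
    have hNsucc : N + 1 = 2^(j+1) := by rw [hN_def]; omega
    set cj : ℝ := ((2:ℝ)^j)^(-lam) * (N:ℝ) with hcj_def
    have hu0 : (0:ℝ) ≤ ((2:ℝ)^j)^(-lam) := Real.rpow_nonneg (by positivity) _
    have hcj0 : 0 ≤ cj := mul_nonneg hu0 (Nat.cast_nonneg _)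
    set g : (Fin d → ℤ) → ℝ := fun x => cj * avgD d N F x with hg_def
    have hgsupp : (Function.support g).Finite := by
      have hEq : g = fun x => ∑ k ∈ Finset.Icc (1:ℕ) N,
          (cj * (N:ℝ)⁻¹) * F (fun i => x i + (k:ℤ)^((i:ℕ)+1)) := by
        funext x
        rw [hg_def]
        show cj * avgD d N F x = _
        rw [avgD, ← mul_assoc, Finset.mul_sum]
      rw [hEq]
      exact supp_translates hFfin _ _ _
    have hpw : ∀ x, h j x ≤ g x := by
      intro x
      have step1 : h j x ≤ ((2:ℝ)^j)^(-lam) *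
          ∑ k ∈ Finset.Ico (2^j - 1 : ℕ) (2^(j+1) - 1 : ℕ), F (fun i => x i + ((k:ℤ)+1)^((i:ℕ)+1)) := by
        simp only [hh_def, Finset.mul_sum]
        apply Finset.sum_le_sum
        intro k hk
        simp only [ht_def]
        apply mul_le_mul_of_nonneg_right _ (hFpos _)
        apply Real.rpow_le_rpow_of_nonpos (by positivity) _ (by linarith)
        have hk' := (Finset.mem_Ico.1 hk).1
        have hkk : (2^j : ℕ) ≤ k + 1 := by omega
        calc (2:ℝ)^j = ((2^j : ℕ) : ℝ) := by push_cast; ring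
          _ ≤ ((k+1 : ℕ) : ℝ) := Nat.cast_le.2 hkk
          _ = (k:ℝ)+1 := by push_cast; ring
      have step2 : ∑ k ∈ Finset.Ico (2^j - 1 : ℕ) (2^(j+1) - 1 : ℕ),
            F (fun i => x i + ((k:ℤ)+1)^((i:ℕ)+1)) =
          ∑ m ∈ Finset.Ico (2^j : ℕ) (2^(j+1) : ℕ), F (fun i => x i + (m:ℤ)^((i:ℕ)+1)) := by
        have hs := sum_shift (fun m => F (fun i => x i + (m:ℤ)^((i:ℕ)+1))) (2^j - 1) (2^(j+1) - 1)
        have e1 : 2^j - 1 + 1 = 2^j := by omega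
        have e2 : 2^(j+1) - 1 + 1 = 2^(j+1) := by omega
        rw [e1, e2] at hs
        refine Eq.trans (Finset.sum_congr rfl fun k _ => ?_) hs
        norm_cast
      have step3 : ∑ m ∈ Finset.Ico (2^j : ℕ) (2^(j+1) : ℕ), F (fun i => x i + (m:ℤ)^((i:ℕ)+1)) ≤
          ∑ m ∈ Finset.Icc 1 N, F (fun i => x i + (m:ℤ)^((i:ℕ)+1)) := by
        apply Finset.sum_le_sum_of_subset_of_nonneg
        · intro m hm
          rw [Finset.mem_Ico] at hm
          rw [Finset.mem_Icc]
          omega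
        · intro m _ _; exact hFpos _
      have hgx : g x = ((2:ℝ)^j)^(-lam) *
          ∑ m ∈ Finset.Icc 1 N, F (fun i => x i + (m:ℤ)^((i:ℕ)+1)) := by
        rw [hg_def]
        show cj * avgD d N F x = _
        rw [avgD, hcj_def]
        have hNne : ((N:ℝ)) ≠ 0 := Nat.cast_ne_zero.2 (by omega)
        field_simp
      calc h j x ≤ ((2:ℝ)^j)^(-lam) *
            ∑ k ∈ Finset.Ico (2^j - 1 : ℕ) (2^(j+1) - 1 : ℕ), F (fun i => x i + ((k:ℤ)+1)^((i:ℕ)+1)) :=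
          step1
        _ = ((2:ℝ)^j)^(-lam) *
            ∑ m ∈ Finset.Ico (2^j : ℕ) (2^(j+1) : ℕ), F (fun i => x i + (m:ℤ)^((i:ℕ)+1)) := by
          rw [step2]
        _ ≤ ((2:ℝ)^j)^(-lam) *
            ∑ m ∈ Finset.Icc 1 N, F (fun i => x i + (m:ℤ)^((i:ℕ)+1)) :=
          mul_le_mul_of_nonneg_left step3 hu0
        _ = g x := hgx.symm
    have hb1 : lpD d q (h j) ≤ lpD d q g := lpD_mono hq0 hgsupp (hh0 j) hpw
    have hb2 : lpD d q g = cj * lpD d q (avgD d N F) := by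
      rw [hg_def]; exact lpD_smul hq0 hcj0 _
    have hb3 := hA N hN1 F hFfin hFpos
    have hb4 : lpD d q (h j) ≤ cj * (C * (N:ℝ)^(-al) * A) := by
      refine hb1.trans (hb2.le.trans ?_)
      exact mul_le_mul_of_nonneg_left hb3 hcj0
    have hNle : ((N:ℝ)) ≤ 2 * (2:ℝ)^j := by
      have hn : (N:ℕ) ≤ 2^(j+1) := by omega
      calc (N:ℝ) ≤ ((2^(j+1):ℕ):ℝ) := Nat.cast_le.2 hn
        _ = 2 * (2:ℝ)^j := by push_cast [h2j1]; ring
    have hNge : (2:ℝ)^j ≤ (N:ℝ) := by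
      have hn : (2:ℕ)^j ≤ N := by omega
      calc (2:ℝ)^j = ((2^j:ℕ):ℝ) := by push_cast; ring
        _ ≤ (N:ℝ) := Nat.cast_le.2 hn
    have hNal : (N:ℝ)^(-al) ≤ ((2:ℝ)^j)^(-al) :=
      Real.rpow_le_rpow_of_nonpos (by positivity) hNge (by linarith)
    have hw0 : (0:ℝ) ≤ ((2:ℝ)^j)^(-al) := Real.rpow_nonneg (by positivity) _
    have e1 : cj * (C * (N:ℝ)^(-al) * A) ≤ cj * (|C| * ((2:ℝ)^j)^(-al) * A) := by
      apply mul_le_mul_of_nonneg_left _ hcj0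
      apply mul_le_mul_of_nonneg_right _ hA0
      calc C * (N:ℝ)^(-al) ≤ |C| * (N:ℝ)^(-al) :=
            mul_le_mul_of_nonneg_right (le_abs_self C) (Real.rpow_nonneg (Nat.cast_nonneg _) _)
        _ ≤ |C| * ((2:ℝ)^j)^(-al) := mul_le_mul_of_nonneg_left hNal (abs_nonneg C)
    have e2 : cj * (|C| * ((2:ℝ)^j)^(-al) * A) ≤
        (((2:ℝ)^j)^(-lam) * (2*(2:ℝ)^j)) * (|C| * ((2:ℝ)^j)^(-al) * A) := by
      apply mul_le_mul_of_nonneg_right _ (by positivity)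
      rw [hcj_def]
      exact mul_le_mul_of_nonneg_left hNle hu0
    have e3 : (((2:ℝ)^j)^(-lam) * (2*(2:ℝ)^j)) * (|C| * ((2:ℝ)^j)^(-al) * A) =
        2 * |C| * A * r ^ j := by
      have pid := pow_identity j lam al
      calc (((2:ℝ)^j)^(-lam) * (2*(2:ℝ)^j)) * (|C| * ((2:ℝ)^j)^(-al) * A)
          = ((((2:ℝ)^j)^(-lam) * (2*(2:ℝ)^j)) * ((2:ℝ)^j)^(-al)) * (|C| * A) := by ring
        _ = (2 * ((2:ℝ)^(1-lam-al))^j) * (|C| * A) := by rw [pid]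
        _ = 2 * |C| * A * r ^ j := by rw [← hr_def]; ring
    exact hb4.trans (e1.trans (e2.trans_eq e3))
  -- lp space machinery
  have Hmem : ∀ j, Memℓp (h j) Q := fun j => memlp_of_finite (hhsupp j) Q
  set H : ℕ → lp (fun _ : Fin d → ℤ => ℝ) Q := fun j => ⟨h j, Hmem j⟩ with hH_def
  have hHcoe : ∀ j, ⇑(H j) = h j := fun j => rfl
  have hHnorm : ∀ j, ‖H j‖ = lpD d q (h j) := fun j => by
    rw [← lpD_eq_norm hq0 (H j), hHcoe]
  have hnorm_le : ∀ j, ‖H j‖ ≤ 2 * |C| * A * r ^ j := fun j => by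
    rw [hHnorm]; exact key j
  have hsumb : Summable (fun j : ℕ => 2 * |C| * A * r ^ j) := hsum_r.mul_left _
  have hsumnorm : Summable (fun j => ‖H j‖) :=
    Summable.of_nonneg_of_le (fun j => norm_nonneg _) hnorm_le hsumb
  have hsumH : Summable H := hsumnorm.of_norm
  set G := ∑' j, H j with hG_def
  have hGnorm : ‖G‖ ≤ ∑' j, ‖H j‖ := norm_tsum_le_tsum_norm hsumnorm
  -- pointwise identification
  have hGx : ∀ x, (⇑G : (Fin d → ℤ) → ℝ) x = fracD d lam F x := by
    intro x
    have hev : (⇑G : (Fin d → ℤ) → ℝ) x = ∑' j, h j x := by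
      have := (evalCLM Q x).map_tsum hsumH
      exact this
    -- finiteness in k
    have hi0 : (0:ℕ) < d := by omega
    have htfin : {k : ℕ | t k x ≠ 0}.Finite := by
      have hsub : {k : ℕ | t k x ≠ 0} ⊆
          (fun k : ℕ => (fun i : Fin d => x i + ((k:ℤ)+1)^((i:ℕ)+1))) ⁻¹'
            (Function.support F) := by
        intro k hk
        simp only [Set.mem_setOf_eq, ht_def] at hk
        simp only [Set.mem_preimage, Function.mem_support]
        intro h0
        exact hk (by rw [h0, mul_zero])
      apply Set.Finite.subset _ hsub
      apply Set.Finite.preimage _ hFfin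
      intro k1 _ k2 _ hk
      have hck := congrFun hk ⟨0, hi0⟩
      have h00 : ((⟨0, hi0⟩ : Fin d) : ℕ) = 0 := rfl
      simp only [h00, zero_add, pow_one] at hck
      omega
    obtain ⟨K, hK⟩ : ∃ K : ℕ, ∀ k, t k x ≠ 0 → k ≤ K := by
      refine ⟨htfin.toFinset.sup id, fun k hk => ?_⟩
      exact Finset.le_sup (f := id) (htfin.mem_toFinset.2 hk)
    set M : ℕ := K + 1 with hM_def
    have hKM : K < 2 ^ M - 1 := by
      have hlt := Nat.lt_two_pow_self (n := K+1)
      rw [hM_def]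
      omega
    have c1 : fracD d lam F x = ∑ k ∈ Finset.range (2^M - 1), t k x := by
      have : fracD d lam F x = ∑' k, t k x := by simp only [fracD, ht_def]
      rw [this]
      apply tsum_eq_sum
      intro k hk
      by_contra hne
      have := hK k hne
      simp only [Finset.mem_range] at hk
      omega
    have c2 : (∑' j, h j x) = ∑ j ∈ Finset.range M, h j x := by
      apply tsum_eq_sum
      intro j hj
      simp only [Finset.mem_range, not_lt] at hj
      rw [hh_def]
      apply Finset.sum_eq_zero
      intro k hk
      rw [Finset.mem_Ico] at hk
      by_contra hne
      have hkK := hK k hne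
      have hpow : 2^M ≤ 2^j := Nat.pow_le_pow_right (by norm_num) hj
      omega
    have c3 : ∑ j ∈ Finset.range M, h j x = ∑ k ∈ Finset.range (2^M - 1), t k x := by
      simp only [hh_def]
      exact dyadic_sum (fun k => t k x) M
    rw [hev, c2, c3, c1]
  have hfinal : lpD d q (fracD d lam F) = ‖G‖ := by
    rw [← lpD_eq_norm hq0 G]
    congr 1
    funext x
    exact (hGx x).symm
  rw [hfinal]
  calc ‖G‖ ≤ ∑' j, ‖H j‖ := hGnorm
    _ ≤ ∑' j : ℕ, 2 * |C| * A * r ^ j := Summable.tsum_le_tsum hnorm_le hsumnorm hsumb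
    _ = 2 * |C| * A * ∑' j : ℕ, r ^ j := tsum_mul_left
    _ = 2 * |C| * (∑' j : ℕ, r ^ j) * A := by ring
end
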